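/- Let N be a positive integer, r > 0, and consider the electrical network G whose underlying graph is a path with vertices 0, 1, …, N+1, conductances c_{k,k+1} = 1 for 0 ≤ k < N and c_{N,N+1} = r. Let G' be the path on vertices 0, 1, …, N with conductances c'_{k,k+1} = (N − k − 1 + 1/r)(N − k + 1/r) / ( (1/r)(1 + 1/r) ) for 0 ≤ k < N. Fix a starting vertex m with 1 ≤ m ≤ N. Let X be the discrete-time random walk on G started at m, let τ be the first time X hits 0 or N+1, and let Y be the discrete-time random walk on G' started at m. Then the path of Y stopped upon hitting 0 has the same distribution as the path of X stopped at time τ, conditioned on the event X_τ = 0. -/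

import Mathlib

open MeasureTheory ProbabilityTheory Filter
open scoped ENNReal NNReal Classical

noncomputable section

/-- The exponential distribution on `ℝ` with mean `μ`: density `μ⁻¹ * exp (-x/μ)`
on `(0, ∞)`. -/
def expDist (μ : ℝ) : Measure ℝ :=
  (volume.restrict (Set.Ioi (0 : ℝ))).withDensity fun x =>
    ENNReal.ofReal (μ⁻¹ * Real.exp (-x / μ))

/-- An electrical network on a vertex type `V`: symmetric nonnegative conductances.
The edges are the pairs of vertices with positive conductance. -/
structure ElecNetwork (V : Type) where
  c : V → V → ℝ
  symm : ∀ x y, c x y = c y x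
  nonneg : ∀ x y, 0 ≤ c x y

namespace ElecNetwork

variable {V : Type}

/-- Total conductance at a vertex. -/
def cTot [Fintype V] (G : ElecNetwork V) (x : V) : ℝ := ∑ y, G.c x y

/-- One-step transition probability of the associated random walk. -/
def jump [Fintype V] (G : ElecNetwork V) (x y : V) : ℝ := G.c x y / G.cTot x

/-- Total conductance of the network (`= 2 |E|` for a graph, counting each
self-loop once in the sum). -/
def cSum [Fintype V] (G : ElecNetwork V) : ℝ := ∑ x, ∑ y, G.c x y

/-- The underlying simple graph: distinct vertices joined by positive conductance. -/
def graph (G : ElecNetwork V) : SimpleGraph V where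
  Adj x y := x ≠ y ∧ 0 < G.c x y
  symm := by
    constructor
    intro x y h
    refine ⟨h.1.symm, ?_⟩
    rw [G.symm y x]
    exact h.2
  loopless := by
    constructor
    intro x h
    exact h.1 rfl

/-- Connectedness of the network. -/
def Conn (G : ElecNetwork V) : Prop := G.graph.Connected

end ElecNetwork

/-- `J` is (a realization of) the discrete-time random walk on `G` started at `v₀`
under the probability measure `P`: the finite-dimensional distributions are the
products of the one-step transition probabilities (Ionescu–Tulcea trajectory law). -/
def IsDiscreteWalk {V : Type} [Fintype V] [MeasurableSpace V] (G : ElecNetwork V) (v₀ : V)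
    {Ω : Type} [MeasurableSpace Ω] (P : Measure Ω) (J : ℕ → Ω → V) : Prop :=
  (∀ n, Measurable (J n)) ∧
    ∀ (n : ℕ) (w : ℕ → V),
      P {ω | ∀ i ≤ n, J i ω = w i} =
        (if w 0 = v₀ then 1 else 0) *
          ∏ i ∈ Finset.range n, ENNReal.ofReal (G.jump (w i) (w (i + 1)))

/-- First index at which the sequence `J` enters the set `A`. -/
def hitIdx {V Ω : Type} (J : ℕ → Ω → V) (A : Set V) (ω : Ω) : ℕ :=
  sInf {n | J n ω ∈ A}

/-- The sequence `J` stopped upon entering `A`. -/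
def stopped {V Ω : Type} (J : ℕ → Ω → V) (A : Set V) (n : ℕ) (ω : Ω) : V :=
  J (min n (hitIdx J A ω)) ω

/-- A continuous-time random walk on the network `G` started at `v₀`, realized on the
probability space `(Ω, P)` via its jump chain `J` (the discrete-time walk) together
with an independent i.i.d. sequence `ξ` of mean-one exponential holding times. -/
structure CTRW {V : Type} [Fintype V] [MeasurableSpace V] (G : ElecNetwork V) (v₀ : V)
    {Ω : Type} [MeasurableSpace Ω] (P : Measure Ω) where
  J : ℕ → Ω → V
  ξ : ℕ → Ω → ℝ
  walk : IsDiscreteWalk G v₀ P J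
  measξ : ∀ n, Measurable (ξ n)
  lawξ : ∀ n, P.map (ξ n) = expDist 1
  iidξ : iIndepFun ξ P
  indepJξ : IndepFun (fun ω => fun n => J n ω) (fun ω => fun n => ξ n ω) P

namespace CTRW

variable {V : Type} [Fintype V] [MeasurableSpace V] {G : ElecNetwork V} {v₀ : V}
  {Ω : Type} [MeasurableSpace Ω] {P : Measure Ω}

/-- Time of the `n`-th jump. -/
def S (W : CTRW G v₀ P) (n : ℕ) (ω : Ω) : ℝ := ∑ i ∈ Finset.range n, W.ξ i ω

/-- Number of jumps made up to time `t`. -/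
def jumps (W : CTRW G v₀ P) (t : ℝ) (ω : Ω) : ℕ := sSup {n | W.S n ω ≤ t}

/-- The continuous-time walk at time `t`. -/
def X (W : CTRW G v₀ P) (t : ℝ) (ω : Ω) : V := W.J (W.jumps t ω) ω

/-- Local time at the vertex `v` up to time `t`, normalized by total conductance. -/
def L (W : CTRW G v₀ P) (t : ℝ) (v : V) (ω : Ω) : ℝ :=
  (G.cTot v)⁻¹ * ∫ s in (0:ℝ)..t, (if W.X s ω = v then (1:ℝ) else 0)

/-- Inverse local time at the starting vertex: first time the local time at `v₀`
reaches `t`. -/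
def invL (W : CTRW G v₀ P) (t : ℝ) (ω : Ω) : ℝ :=
  sInf {s : ℝ | 0 ≤ s ∧ t ≤ W.L s v₀ ω}

/-- First time the walk is in the set `A`. -/
def hitTime (W : CTRW G v₀ P) (A : Set V) (ω : Ω) : ℝ :=
  sInf {t : ℝ | 0 ≤ t ∧ W.X t ω ∈ A}

/-- The cover time: the first time every vertex has been visited. -/
def coverTime (W : CTRW G v₀ P) (ω : Ω) : ℝ :=
  sInf {t : ℝ | 0 ≤ t ∧ ∀ v : V, ∃ s, 0 ≤ s ∧ s ≤ t ∧ W.X s ω = v}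

end CTRW

/-- Dirichlet energy of `f`, with the `1/4` normalization of the GFF density. -/
def gffEnergy {V : Type} [Fintype V] (G : ElecNetwork V) (f : V → ℝ) : ℝ :=
  (1 / 4) * ∑ x, ∑ y, G.c x y * (f x - f y) ^ 2

/-- Extend a function on `V \ {v₀}` by zero at `v₀`. -/
def extendZero {V : Type} (v₀ : V) (f : {v : V // v ≠ v₀} → ℝ) (x : V) : ℝ :=
  if h : x = v₀ then 0 else f ⟨x, h⟩

/-- Unnormalized GFF measure on functions on `V \ {v₀}`. -/
def gffPre {V : Type} [Fintype V] (G : ElecNetwork V) (v₀ : V) :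
    Measure ({v : V // v ≠ v₀} → ℝ) :=
  volume.withDensity fun f => ENNReal.ofReal (Real.exp (-gffEnergy G (extendZero v₀ f)))

/-- The law of the Gaussian free field on `G` with boundary `{v₀}`, as a probability
measure on `V → ℝ` (the field vanishes at `v₀`). -/
def gffMeasure {V : Type} [Fintype V] (G : ElecNetwork V) (v₀ : V) : Measure (V → ℝ) :=
  (gffPre G v₀ Set.univ)⁻¹ • (gffPre G v₀).map (extendZero v₀)

/-- `η` is a Gaussian free field on `G` with boundary `{v₀}`. -/
def IsGFF {V : Type} [Fintype V] (G : ElecNetwork V) (v₀ : V) {Ω : Type}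
    [MeasurableSpace Ω] (P : Measure Ω) (η : Ω → V → ℝ) : Prop :=
  Measurable η ∧ P.map η = gffMeasure G v₀

/-- `M = 𝔼 max_x η_x`: the expected maximum of the field `η`. -/
def gffM {Ω V : Type} [MeasurableSpace Ω] (P : Measure Ω) (η : Ω → V → ℝ) : ℝ :=
  ∫ ω, (⨆ x, η ω x) ∂P

/-- `R = max_{x,y} 𝔼 (η_x - η_y)²`: the effective resistance diameter. -/
def gffR {Ω V : Type} [MeasurableSpace Ω] (P : Measure Ω) (η : Ω → V → ℝ) : ℝ :=
  ⨆ q : V × V, ∫ ω, (η ω q.1 - η ω q.2) ^ 2 ∂P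

/-- `B` is a standard one-dimensional Brownian motion started at `x`: measurable,
a.s. continuous, independent Gaussian increments. -/
structure IsBM {Ω : Type} [MeasurableSpace Ω] (P : Measure Ω) (B : ℝ → Ω → ℝ) (x : ℝ) :
    Prop where
  meas : ∀ t, Measurable (B t)
  start : ∀ᵐ ω ∂P, B 0 ω = x
  cont : ∀ᵐ ω ∂P, Continuous fun t => B t ω
  indepIncr : ∀ (n : ℕ) (t : Fin (n + 1) → ℝ), Monotone t → 0 ≤ t 0 →
    iIndepFun
      (fun i : Fin n => fun ω => B (t i.succ) ω - B (t i.castSucc) ω) P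
  lawIncr : ∀ s t : ℝ, 0 ≤ s → s ≤ t →
    P.map (fun ω => B t ω - B s ω) = gaussianReal 0 (t - s).toNNReal

/-- `B` is a standard planar Brownian motion started at `y`: the two coordinates are
independent standard one-dimensional Brownian motions. -/
structure IsPlanarBM {Ω : Type} [MeasurableSpace Ω] (P : Measure Ω) (B : ℝ → Ω → ℝ × ℝ)
    (y : ℝ × ℝ) : Prop where
  fst : IsBM P (fun t ω => (B t ω).1) y.1
  snd : IsBM P (fun t ω => (B t ω).2) y.2
  indep : IndepFun (fun ω => fun t : ℝ => (B t ω).1) (fun ω => fun t : ℝ => (B t ω).2) P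

/-- Squared Euclidean norm on `ℝ × ℝ`. -/
def normSq2 (p : ℝ × ℝ) : ℝ := p.1 ^ 2 + p.2 ^ 2

/-- Conductance function of a path whose `k`-th edge `(k, k+1)` has conductance `cf k`. -/
def pathC (cf : ℕ → ℝ) {M : ℕ} (a b : Fin M) : ℝ :=
  if a.val + 1 = b.val then cf a.val else if b.val + 1 = a.val then cf b.val else 0

/-- The network `G` is the path with vertices `0, 1, …, M-1` and conductance `cf k`
between `k` and `k+1`. -/
def IsPathNetwork {M : ℕ} (G : ElecNetwork (Fin M)) (cf : ℕ → ℝ) : Prop :=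
  ∀ a b, G.c a b = pathC cf a b

/-! ### The `N`-fold refinement of a network -/

/-- An arbitrary enumeration of the (finite) vertex set, used to pick a canonical
orientation for each edge. -/
def vidx {V : Type} [Fintype V] (v : V) : ℕ := (Fintype.equivFin V v).val

/-- Canonically oriented edges of the network. -/
abbrev EdgeIdx {V : Type} [Fintype V] (G : ElecNetwork V) : Type :=
  {e : V × V // G.c e.1 e.2 ≠ 0 ∧ vidx e.1 < vidx e.2}

/-- The vertex set of the `N`-fold refinement: the original vertices together with
`N - 1` interior subdivision points on each edge. -/
abbrev RefVert {V : Type} [Fintype V] (G : ElecNetwork V) (N : ℕ) : Type :=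
  V ⊕ (EdgeIdx G × Fin (N - 1))

/-- The point `v_{xy,i}` (`0 ≤ i ≤ N`) of the refined network: the `i`-th subdivision
point along the edge from `x` to `y` (so `v_{xy,0} = x`, `v_{xy,N} = y`, and
`v_{yx,i} = v_{xy,N-i}`). -/
def vmap {V : Type} [Fintype V] (G : ElecNetwork V) (N : ℕ) (x y : V) (i : ℕ) :
    RefVert G N :=
  if _h0 : i = 0 then Sum.inl x
  else if _hN : N ≤ i then Sum.inl y
  else if h : G.c x y ≠ 0 ∧ vidx x < vidx y then
    Sum.inr (⟨(x, y), h⟩, ⟨i - 1, by omega⟩)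
  else if h' : G.c y x ≠ 0 ∧ vidx y < vidx x then
    Sum.inr (⟨(y, x), h'⟩, ⟨N - i - 1, by omega⟩)
  else Sum.inl x

/-- Conductances of the `N`-fold refinement: each edge of conductance `c` is replaced
by a path of `N` edges, each of conductance `N·c`. -/
def refC {V : Type} [Fintype V] (G : ElecNetwork V) (N : ℕ) :
    RefVert G N → RefVert G N → ℝ
  | Sum.inl _, Sum.inl _ => 0
  | Sum.inl x, Sum.inr (e, i) =>
      (if x = e.1.1 ∧ i.val = 0 then (N : ℝ) * G.c e.1.1 e.1.2 else 0) +
      (if x = e.1.2 ∧ i.val = N - 2 then (N : ℝ) * G.c e.1.1 e.1.2 else 0)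
  | Sum.inr (e, i), Sum.inl x =>
      (if x = e.1.1 ∧ i.val = 0 then (N : ℝ) * G.c e.1.1 e.1.2 else 0) +
      (if x = e.1.2 ∧ i.val = N - 2 then (N : ℝ) * G.c e.1.1 e.1.2 else 0)
  | Sum.inr (e, i), Sum.inr (f, j) =>
      if e = f ∧ (i.val + 1 = j.val ∨ j.val + 1 = i.val) then (N : ℝ) * G.c e.1.1 e.1.2
      else 0

/-- The `N`-fold refinement of a (loopless) network `G`, for `N ≥ 2`. -/
def ElecNetwork.refine {V : Type} [Fintype V] (G : ElecNetwork V) (N : ℕ) :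
    ElecNetwork (RefVert G N) where
  c := refC G N
  symm := by
    rintro (x | ⟨e, i⟩) (y | ⟨f, j⟩)
    · rfl
    · rfl
    · rfl
    · simp only [refC]
      rcases eq_or_ne e f with h | h
      · subst h
        by_cases h2 : i.val + 1 = j.val ∨ j.val + 1 = i.val
        · rw [if_pos ⟨rfl, h2⟩, if_pos ⟨rfl, h2.symm⟩]
        · rw [if_neg (by tauto), if_neg (by tauto)]
      · rw [if_neg (by tauto), if_neg (by tauto)]
  nonneg := by
    have hc : ∀ a b : V, (0 : ℝ) ≤ (N : ℝ) * G.c a b := fun a b =>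
      mul_nonneg (Nat.cast_nonneg N) (G.nonneg a b)
    rintro (x | ⟨e, i⟩) (y | ⟨f, j⟩)
    · exact le_rfl
    · refine add_nonneg ?_ ?_ <;> (split_ifs <;> first | exact hc _ _ | exact le_rfl)
    · refine add_nonneg ?_ ?_ <;> (split_ifs <;> first | exact hc _ _ | exact le_rfl)
    · simp only [refC]
      split_ifs <;> first | exact hc _ _ | exact le_rfl

end
noncomputable section
set_option linter.unusedSectionVars false
namespace CPW

/-- Sum over a range of a function supported on at most two points. -/
lemma sum_two (M u v : ℕ) (huv : u ≠ v) (g : ℕ → ℝ)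
    (h : ∀ j, j ≠ u → j ≠ v → g j = 0) :
    ∑ j ∈ Finset.range M, g j =
      (if u < M then g u else 0) + (if v < M then g v else 0) := by
  induction M with
  | zero => simp
  | succ M ih =>
    rw [Finset.sum_range_succ, ih]
    by_cases hu : M = u
    · subst hu
      by_cases hv2 : v < M
      · rw [if_neg (lt_irrefl M), if_pos hv2, if_pos (Nat.lt_succ_self M),
          if_pos (show v < M + 1 by omega)]
        ring
      · rw [if_neg (lt_irrefl M), if_neg hv2, if_pos (Nat.lt_succ_self M),
          if_neg (show ¬ v < M + 1 by omega)]
        ring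
    · by_cases hv : M = v
      · subst hv
        by_cases hu2 : u < M
        · rw [if_neg (lt_irrefl M), if_pos hu2, if_pos (Nat.lt_succ_self M),
            if_pos (show u < M + 1 by omega)]
          ring
        · rw [if_neg (lt_irrefl M), if_neg hu2, if_pos (Nat.lt_succ_self M),
            if_neg (show ¬ u < M + 1 by omega)]
          ring
      · rw [h M hu hv, add_zero]
        have e1 : (u < M) = (u < M + 1) := propext (by constructor <;> omega)
        have e2 : (v < M) = (v < M + 1) := propext (by constructor <;> omega)
        simp only [e1, e2]

variable {V : Type} [Fintype V] [MeasurableSpace V] [MeasurableSingletonClass V]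
  {Ω : Type} [MeasurableSpace Ω]

lemma meas_cyl {J : ℕ → Ω → V} (hJ : ∀ n, Measurable (J n)) (n : ℕ) (w : ℕ → V) :
    MeasurableSet {ω | ∀ i ≤ n, J i ω = w i} := by
  have : {ω | ∀ i ≤ n, J i ω = w i} = ⋂ i ∈ Set.Iic n, (J i) ⁻¹' {w i} := by
    ext ω; simp [Set.mem_iInter]
  rw [this]
  exact MeasurableSet.biInter (Set.to_countable _)
    fun i _ => (hJ i) (measurableSet_singleton _)

lemma meas_setV (A : Set V) : MeasurableSet A := (Set.to_countable A).measurableSet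

/-- Event: trajectory matches `w` up to `n`, avoids `A` on `[n, ℓ)`, equals `z` at `ℓ`. -/
def hitEvent (J : ℕ → Ω → V) (A : Set V) (z : V) (ℓ n : ℕ) (w : ℕ → V) : Set Ω :=
  {ω | (∀ i ≤ n, J i ω = w i) ∧ (∀ j, n ≤ j → j < ℓ → J j ω ∉ A) ∧ J ℓ ω = z}

lemma meas_hitEvent {J : ℕ → Ω → V} (hJ : ∀ n, Measurable (J n)) (A : Set V) (z : V)
    (ℓ n : ℕ) (w : ℕ → V) : MeasurableSet (hitEvent J A z ℓ n w) := by
  have : hitEvent J A z ℓ n w =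
      {ω | ∀ i ≤ n, J i ω = w i} ∩
        ((⋂ j ∈ Set.Ico n ℓ, (J j) ⁻¹' Aᶜ) ∩ (J ℓ) ⁻¹' {z}) := by
    ext ω
    simp only [hitEvent, Set.mem_setOf_eq, Set.mem_inter_iff, Set.mem_iInter,
      Set.mem_preimage, Set.mem_compl_iff, Set.mem_singleton_iff, Set.mem_Ico]
    tauto
  rw [this]
  exact (meas_cyl hJ n w).inter
    ((MeasurableSet.biInter (Set.to_countable _)
      (fun j _ => (hJ j) (meas_setV Aᶜ))).inter ((hJ ℓ) (measurableSet_singleton _)))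

/-- `qfun G A z j v`: probability of reaching `z` in exactly `j` steps from `v`
while staying outside `A` before the final step. -/
def qfun (G : ElecNetwork V) (A : Set V) (z : V) : ℕ → V → ℝ≥0∞
  | 0, v => if v = z then 1 else 0
  | (j+1), v => if v ∈ A then 0 else ∑ u, ENNReal.ofReal (G.jump v u) * qfun G A z j u

lemma hitEvent_prob {G : ElecNetwork V} {v₀ : V} {P : Measure Ω} {J : ℕ → Ω → V}
    (hJ : IsDiscreteWalk G v₀ P J) (A : Set V) (z : V) :
    ∀ (d n : ℕ) (w : ℕ → V),
      P (hitEvent J A z (n + d) n w) =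
        (if w 0 = v₀ then 1 else 0) *
          (∏ i ∈ Finset.range n, ENNReal.ofReal (G.jump (w i) (w (i + 1)))) *
          qfun G A z d (w n) := by
  intro d
  induction d with
  | zero =>
    intro n w
    rcases eq_or_ne (w n) z with hz | hz
    · have : hitEvent J A z (n + 0) n w = {ω | ∀ i ≤ n, J i ω = w i} := by
        ext ω
        simp only [hitEvent, Set.mem_setOf_eq, Nat.add_zero]
        constructor
        · rintro ⟨h1, _, _⟩; exact h1
        · intro h1
          exact ⟨h1, fun j hj1 hj2 => absurd (lt_of_le_of_lt hj1 hj2) (lt_irrefl _),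
            by rw [h1 n le_rfl, hz]⟩
      rw [this, hJ.2 n w, qfun, if_pos hz, mul_one]
    · have : hitEvent J A z (n + 0) n w = ∅ := by
        ext ω
        simp only [hitEvent, Set.mem_setOf_eq, Nat.add_zero, Set.mem_empty_iff_false,
          iff_false, not_and]
        intro h1 _
        rw [h1 n le_rfl]; exact hz
      rw [this, qfun, if_neg hz]
      simp
  | succ d ih =>
    intro n w
    by_cases hA : w n ∈ A
    · have : hitEvent J A z (n + (d+1)) n w = ∅ := by
        ext ω
        simp only [hitEvent, Set.mem_setOf_eq, Set.mem_empty_iff_false, iff_false, not_and]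
        intro h1 h2
        exfalso
        apply h2 n le_rfl (by omega)
        rw [h1 n le_rfl]
        exact hA
      rw [this, qfun, if_pos hA]
      simp
    · have hsplit : hitEvent J A z (n + (d+1)) n w =
          ⋃ u : V, hitEvent J A z ((n+1) + d) (n+1) (Function.update w (n+1) u) := by
        ext ω
        simp only [hitEvent, Set.mem_setOf_eq, Set.mem_iUnion]
        constructor
        · rintro ⟨h1, h2, h3⟩
          refine ⟨J (n+1) ω, ?_, ?_, ?_⟩
          · intro i hi
            rcases eq_or_ne i (n+1) with rfl | hne
            · rw [Function.update_self]
            · rw [Function.update_of_ne hne]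
              exact h1 i (by omega)
          · intro j hj1 hj2
            exact h2 j (by omega) (by omega)
          · convert h3 using 2
            omega
        · rintro ⟨u, h1, h2, h3⟩
          refine ⟨?_, ?_, ?_⟩
          · intro i hi
            have hh := h1 i (by omega)
            rwa [Function.update_of_ne (by omega)] at hh
          · intro j hj1 hj2
            by_cases hne : j = n
            · subst hne
              have hh := h1 j (by omega)
              rw [Function.update_of_ne (by omega)] at hh
              rw [hh]
              exact hA
            · exact h2 j (by omega) (by omega)
          · convert h3 using 2
            omega
      have hdisj : Pairwise (Function.onFun Disjoint fun u : V =>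
          hitEvent J A z ((n+1) + d) (n+1) (Function.update w (n+1) u)) := by
        intro u u' huu'
        simp only [Function.onFun]
        rw [Set.disjoint_left]
        rintro ω ⟨h1, -, -⟩ ⟨h1', -, -⟩
        apply huu'
        have e1 := h1 (n+1) le_rfl
        have e2 := h1' (n+1) le_rfl
        rw [Function.update_self] at e1 e2
        rw [← e1, ← e2]
      rw [hsplit, measure_iUnion hdisj (fun u => meas_hitEvent hJ.1 A z _ _ _), tsum_fintype]
      have heach : ∀ u : V,
          P (hitEvent J A z ((n+1) + d) (n+1) (Function.update w (n+1) u)) =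
            ((if w 0 = v₀ then 1 else 0) *
              ∏ i ∈ Finset.range n, ENNReal.ofReal (G.jump (w i) (w (i + 1)))) *
              (ENNReal.ofReal (G.jump (w n) u) * qfun G A z d u) := by
        intro u
        rw [ih (n+1) (Function.update w (n+1) u)]
        rw [Function.update_of_ne (by omega : (0:ℕ) ≠ n+1), Function.update_self]
        rw [Finset.prod_range_succ]
        have hcon : ∀ i ∈ Finset.range n,
            ENNReal.ofReal (G.jump (Function.update w (n+1) u i)
              (Function.update w (n+1) u (i+1))) =
            ENNReal.ofReal (G.jump (w i) (w (i+1))) := by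
          intro i hi
          simp only [Finset.mem_range] at hi
          rw [Function.update_of_ne (by omega), Function.update_of_ne (by omega)]
        rw [Finset.prod_congr rfl hcon, Function.update_of_ne (by omega : n ≠ n+1),
          Function.update_self]
        ring
      simp only [heach]
      rw [← Finset.mul_sum, qfun, if_neg hA]
      try ring

end CPW
end
noncomputable section
set_option linter.unusedSectionVars false
namespace CPW

variable {V : Type} [Fintype V] [MeasurableSpace V] [MeasurableSingletonClass V]
  {Ω : Type} [MeasurableSpace Ω]

/-- Total probability of hitting `z` while avoiding `A` strictly before. -/
def Sfun (G : ElecNetwork V) (A : Set V) (z : V) (v : V) : ℝ≥0∞ := ∑' j, qfun G A z j v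

lemma qfun_partial_le (G : ElecNetwork V) (A : Set V) (z : V) (hz : z ∈ A)
    (hsum : ∀ v, ∑ u, ENNReal.ofReal (G.jump v u) ≤ 1) :
    ∀ (M : ℕ) (v : V), ∑ j ∈ Finset.range M, qfun G A z j v ≤ 1 := by
  intro M
  induction M with
  | zero => intro v; simp
  | succ M ih =>
    intro v
    rw [Finset.sum_range_succ']
    by_cases hv : v ∈ A
    · have hzero : ∀ j, qfun G A z (j+1) v = 0 := fun j => by rw [qfun, if_pos hv]
      simp only [hzero, Finset.sum_const_zero, zero_add, qfun]
      split_ifs <;> simp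
    · have hvz : v ≠ z := fun h => hv (by rw [h]; exact hz)
      have h0 : qfun G A z 0 v = 0 := by rw [qfun, if_neg hvz]
      rw [h0, add_zero]
      have hstep : ∀ j, qfun G A z (j+1) v =
          ∑ u, ENNReal.ofReal (G.jump v u) * qfun G A z j u := fun j => by
        rw [qfun, if_neg hv]
      simp only [hstep]
      rw [Finset.sum_comm]
      calc ∑ u, ∑ j ∈ Finset.range M, ENNReal.ofReal (G.jump v u) * qfun G A z j u
          = ∑ u, ENNReal.ofReal (G.jump v u) * ∑ j ∈ Finset.range M, qfun G A z j u := by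
            simp [Finset.mul_sum]
        _ ≤ ∑ u, ENNReal.ofReal (G.jump v u) * 1 :=
            Finset.sum_le_sum (fun u _ => mul_le_mul_right (ih u) _)
        _ ≤ 1 := by simpa using hsum v

lemma Sfun_le_one (G : ElecNetwork V) (A : Set V) (z : V) (hz : z ∈ A)
    (hsum : ∀ v, ∑ u, ENNReal.ofReal (G.jump v u) ≤ 1) (v : V) :
    Sfun G A z v ≤ 1 :=
  Summable.tsum_le_of_sum_range_le ENNReal.summable (fun M => qfun_partial_le G A z hz hsum M v)

lemma Sfun_harm (G : ElecNetwork V) (A : Set V) (z : V) (hz : z ∈ A) {v : V} (hv : v ∉ A) :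
    Sfun G A z v = ∑ u, ENNReal.ofReal (G.jump v u) * Sfun G A z u := by
  have hvz : v ≠ z := fun h => hv (by rw [h]; exact hz)
  have h0 : qfun G A z 0 v = 0 := by rw [qfun, if_neg hvz]
  rw [Sfun, tsum_eq_zero_add' ENNReal.summable, h0, zero_add]
  have hstep : ∀ j, qfun G A z (j+1) v =
      ∑ u, ENNReal.ofReal (G.jump v u) * qfun G A z j u := fun j => by
    rw [qfun, if_neg hv]
  simp only [hstep]
  rw [Summable.tsum_finsetSum (fun u _ => ENNReal.summable)]
  congr 1
  funext u
  rw [ENNReal.tsum_mul_left]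
  rfl

lemma Sfun_mem (G : ElecNetwork V) (A : Set V) (z : V) (hz : z ∈ A)
    (hsum : ∀ v, ∑ u, ENNReal.ofReal (G.jump v u) ≤ 1) {v : V} (hv : v ∈ A) :
    Sfun G A z v = if v = z then 1 else 0 := by
  have hzero : ∀ j, qfun G A z (j+1) v = 0 := fun j => by rw [qfun, if_pos hv]
  rw [Sfun, tsum_eq_zero_add' ENNReal.summable]
  simp only [qfun, if_pos hv, tsum_zero, add_zero]

/-! ### stopped walk set identities -/

lemma hit_eq_min {J : ℕ → Ω → V} {A : Set V} {ω : Ω} {k : ℕ}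
    (h : J (min k (hitIdx J A ω)) ω ∈ A) :
    hitIdx J A ω = min k (hitIdx J A ω) :=
  le_antisymm (Nat.sInf_le h) (min_le_right _ _)

/-- If the stopped walk matches `w` up to `n` and `w k ∈ A` for some `k ≤ n`, then the
hit happened, the hit value is `w k`, and `w` is frozen from `k` on. -/
lemma stopped_absorbed {J : ℕ → Ω → V} {A : Set V} {n k : ℕ} {w : ℕ → V}
    (hk : k ≤ n) (hwk : w k ∈ A) {ω : Ω} (hω : ∀ i ≤ n, stopped J A i ω = w i) :
    J (hitIdx J A ω) ω = w k ∧ hitIdx J A ω ≤ k ∧ ∀ j, k ≤ j → j ≤ n → w j = w k := by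
  have h1 : J (min k (hitIdx J A ω)) ω = w k := hω k hk
  have hmin := hit_eq_min (h1 ▸ hwk)
  have hle : hitIdx J A ω ≤ k := hmin ▸ min_le_left _ _
  refine ⟨by rw [hmin, h1], hle, fun j hj1 hj2 => ?_⟩
  have h2 : J (min j (hitIdx J A ω)) ω = w j := hω j hj2
  rw [min_eq_right (le_trans hle hj1)] at h2
  have h3 : J (hitIdx J A ω) ω = w k := by rw [hmin]; exact h1
  rw [← h2, h3]

lemma stopped_interior_inter {J : ℕ → Ω → V} {A : Set V} {z : V} (hz : z ∈ A)
    {n : ℕ} {w : ℕ → V} (hw : ∀ i ≤ n, w i ∉ A) :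
    {ω | ∀ i ≤ n, stopped J A i ω = w i} ∩ {ω | J (hitIdx J A ω) ω = z} =
      ⋃ j : ℕ, hitEvent J A z (n + j) n w := by
  ext ω
  simp only [Set.mem_inter_iff, Set.mem_setOf_eq, Set.mem_iUnion]
  constructor
  · rintro ⟨hs, hz'⟩
    have hne : {i | J i ω ∈ A}.Nonempty := by
      by_contra hemp
      rw [Set.not_nonempty_iff_eq_empty] at hemp
      have h0 : hitIdx J A ω = 0 := by rw [hitIdx, hemp, Nat.sInf_empty]
      have : J 0 ω = w 0 := by
        have := hs 0 (Nat.zero_le n)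
        rwa [stopped, min_eq_left (Nat.zero_le _)] at this
      rw [h0, this] at hz'
      exact hw 0 (Nat.zero_le n) (hz' ▸ hz)
    have hTmem : J (hitIdx J A ω) ω ∈ A := Nat.sInf_mem hne
    have hTgt : n < hitIdx J A ω := by
      by_contra hle
      push_neg at hle
      have := hs (hitIdx J A ω) hle
      rw [stopped, min_self] at this
      exact hw _ hle (this ▸ hTmem)
    have hstop : ∀ i ≤ n, J i ω = w i := fun i hi => by
      have := hs i hi
      rwa [stopped, min_eq_left (by omega)] at this
    refine ⟨hitIdx J A ω - n, hstop, fun j hj1 hj2 => fun hjA => ?_, ?_⟩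
    · have hle2 : hitIdx J A ω ≤ j := Nat.sInf_le hjA
      omega
    · rw [show n + (hitIdx J A ω - n) = hitIdx J A ω by omega]
      exact hz'
  · rintro ⟨j, h1, h2, h3⟩
    have hmem : (n + j : ℕ) ∈ {i | J i ω ∈ A} := by
      simp only [Set.mem_setOf_eq, h3]; exact hz
    have hT : hitIdx J A ω = n + j := by
      refine le_antisymm (Nat.sInf_le hmem) ?_
      by_contra hlt
      push_neg at hlt
      have hne2 : {i | J i ω ∈ A}.Nonempty := ⟨n + j, hmem⟩
      have hm : J (hitIdx J A ω) ω ∈ A := Nat.sInf_mem hne2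
      rcases le_or_gt (hitIdx J A ω) n with hc | hc
      · rw [h1 _ hc] at hm
        exact hw _ hc hm
      · exact h2 _ (le_of_lt hc) hlt hm
    constructor
    · intro i hi
      rw [stopped, hT, min_eq_left (by omega)]
      exact h1 i hi
    · rw [hT]; exact h3

lemma stopped_absorb_eq {J : ℕ → Ω → V} {A : Set V} {z : V} (hz : z ∈ A)
    {n k : ℕ} {w : ℕ → V} (hk : k ≤ n) (hw : ∀ i < k, w i ∉ A) (hwk : w k = z)
    (hconst : ∀ j, k ≤ j → j ≤ n → w j = z) :
    {ω | ∀ i ≤ n, stopped J A i ω = w i} = {ω | ∀ i ≤ k, J i ω = w i} := by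
  ext ω
  simp only [Set.mem_setOf_eq]
  constructor
  · intro hs
    obtain ⟨hhit, hle, -⟩ := stopped_absorbed hk (show w k ∈ A by rw [hwk]; exact hz) hs
    have hT : hitIdx J A ω = k := by
      rcases Nat.lt_or_ge (hitIdx J A ω) k with hlt | hge
      · exfalso
        have hh := hs _ (le_trans (le_of_lt hlt) hk)
        rw [stopped, min_self] at hh
        apply hw _ hlt
        rw [← hh, hhit, hwk]
        exact hz
      · omega
    intro i hi
    have := hs i (le_trans hi hk)
    rwa [stopped, hT, min_eq_left hi] at this
  · intro hc
    have hT : hitIdx J A ω = k := by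
      refine le_antisymm (Nat.sInf_le ?_) ?_
      · show J k ω ∈ A
        rw [hc k le_rfl, hwk]; exact hz
      · by_contra hlt
        push_neg at hlt
        have hne2 : {i | J i ω ∈ A}.Nonempty :=
          ⟨k, show J k ω ∈ A by rw [hc k le_rfl, hwk]; exact hz⟩
        have hm : J (hitIdx J A ω) ω ∈ A := Nat.sInf_mem hne2
        rw [hc _ (le_of_lt hlt)] at hm
        exact hw _ hlt hm
    intro i hi
    rw [stopped, hT]
    rcases le_or_gt i k with hik | hik
    · rw [min_eq_left hik]; exact hc i hik
    · rw [min_eq_right (le_of_lt hik), hc k le_rfl, hwk]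
      exact (hconst i (le_of_lt hik) hi).symm

lemma stopped_absorb_subset_hit {J : ℕ → Ω → V} {A : Set V} {z : V} (hz : z ∈ A)
    {n k : ℕ} {w : ℕ → V} (hk : k ≤ n) (hwk : w k = z) :
    {ω | ∀ i ≤ n, stopped J A i ω = w i} ⊆ {ω | J (hitIdx J A ω) ω = z} := by
  intro ω hs
  obtain ⟨hhit, -, -⟩ := stopped_absorbed hk (show w k ∈ A by rw [hwk]; exact hz) hs
  show J (hitIdx J A ω) ω = z
  rw [hhit, hwk]

/-! ### measurability -/

lemma meas_hitIdx {J : ℕ → Ω → V} (hJ : ∀ n, Measurable (J n)) (A : Set V) :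
    Measurable (fun ω => hitIdx J A ω) := by
  apply measurable_to_countable'
  intro k
  match k with
  | 0 =>
    have : (fun ω => hitIdx J A ω) ⁻¹' {0} =
        {ω | J 0 ω ∈ A} ∪ ⋂ j, {ω | J j ω ∉ A} := by
      ext ω
      simp only [Set.mem_preimage, Set.mem_singleton_iff, Set.mem_union, Set.mem_setOf_eq,
        Set.mem_iInter, hitIdx, Nat.sInf_eq_zero]
      constructor
      · rintro (h | h)
        · exact Or.inl h
        · exact Or.inr (fun j hj => by rw [Set.eq_empty_iff_forall_notMem] at h; exact h j hj)
      · rintro (h | h)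
        · exact Or.inl h
        · exact Or.inr (Set.eq_empty_iff_forall_notMem.2 (fun j hj => h j hj))
    rw [this]
    exact ((hJ 0) (meas_setV A)).union
      (MeasurableSet.iInter fun j => (hJ j) (meas_setV Aᶜ))
  | (k+1) =>
    have : (fun ω => hitIdx J A ω) ⁻¹' {k+1} =
        {ω | J (k+1) ω ∈ A} ∩ ⋂ j ∈ Set.Iic k, {ω | J j ω ∉ A} := by
      ext ω
      simp only [Set.mem_preimage, Set.mem_singleton_iff, Set.mem_inter_iff, Set.mem_setOf_eq,
        Set.mem_iInter, Set.mem_Iic]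
      constructor
      · intro h
        have hne : {i | J i ω ∈ A}.Nonempty := by
          by_contra hemp
          rw [Set.not_nonempty_iff_eq_empty] at hemp
          rw [hitIdx, hemp, Nat.sInf_empty] at h
          omega
        have hm := Nat.sInf_mem hne
        rw [hitIdx] at h
        rw [h] at hm
        refine ⟨hm, fun j hj hjA => ?_⟩
        have hle2 : sInf {n | J n ω ∈ A} ≤ j := Nat.sInf_le hjA
        omega
      · rintro ⟨h1, h2⟩
        refine le_antisymm (Nat.sInf_le (show (k+1) ∈ {i | J i ω ∈ A} from h1)) ?_
        by_contra hlt
        push_neg at hlt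
        have hne2 : {i | J i ω ∈ A}.Nonempty := ⟨k+1, show (k+1) ∈ {i | J i ω ∈ A} from h1⟩
        have hm : J (hitIdx J A ω) ω ∈ A := Nat.sInf_mem hne2
        exact h2 _ (by omega) hm
    rw [this]
    exact ((hJ (k+1)) (meas_setV A)).inter
      (MeasurableSet.biInter (Set.to_countable _) fun j _ => (hJ j) (meas_setV Aᶜ))

lemma meas_stopped {J : ℕ → Ω → V} (hJ : ∀ n, Measurable (J n)) (A : Set V) (n : ℕ) :
    Measurable (fun ω => stopped J A n ω) := by
  apply measurable_to_countable'
  intro v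
  have : (fun ω => stopped J A n ω) ⁻¹' {v} =
      ⋃ j : ℕ, ((fun ω => hitIdx J A ω) ⁻¹' {i | min n i = j} ∩ (J j) ⁻¹' {v}) := by
    ext ω
    simp only [Set.mem_preimage, Set.mem_singleton_iff, Set.mem_iUnion, Set.mem_inter_iff,
      Set.mem_setOf_eq, stopped]
    constructor
    · intro h
      exact ⟨min n (hitIdx J A ω), rfl, h⟩
    · rintro ⟨j, h1, h2⟩
      rw [h1]; exact h2
  rw [this]
  exact MeasurableSet.iUnion fun j =>
    ((meas_hitIdx hJ A) (MeasurableSpace.measurableSet_top)).inter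
      ((hJ j) (measurableSet_singleton v))

lemma meas_hitSet {J : ℕ → Ω → V} (hJ : ∀ n, Measurable (J n)) (A : Set V) (z : V) :
    MeasurableSet {ω | J (hitIdx J A ω) ω = z} := by
  have : {ω | J (hitIdx J A ω) ω = z} =
      ⋃ j : ℕ, ((fun ω => hitIdx J A ω) ⁻¹' {j} ∩ (J j) ⁻¹' {z}) := by
    ext ω
    simp only [Set.mem_setOf_eq, Set.mem_iUnion, Set.mem_inter_iff, Set.mem_preimage,
      Set.mem_singleton_iff]
    constructor
    · intro h
      exact ⟨hitIdx J A ω, rfl, h⟩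
    · rintro ⟨j, h1, h2⟩
      rw [h1]; exact h2
  rw [this]
  exact MeasurableSet.iUnion fun j =>
    ((meas_hitIdx hJ A) (measurableSet_singleton j)).inter ((hJ j) (measurableSet_singleton z))

lemma hitEvent_pairwise_disjoint {J : ℕ → Ω → V} {A : Set V} {z : V} (hz : z ∈ A)
    (n : ℕ) (w : ℕ → V) :
    Pairwise (Function.onFun Disjoint fun j : ℕ => hitEvent J A z (n + j) n w) := by
  intro j j' hjj'
  simp only [Function.onFun]
  rw [Set.disjoint_left]
  rintro ω ⟨-, h2, h3⟩ ⟨-, h2', h3'⟩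
  rcases hjj'.lt_or_gt with h | h
  · exact h2' (n + j) (by omega) (by omega) (by rw [h3]; exact hz)
  · exact h2 (n + j') (by omega) (by omega) (by rw [h3']; exact hz)

end CPW
end
noncomputable section
set_option linter.unusedSectionVars false
namespace CPW

lemma c_path_val {M : ℕ} (G : ElecNetwork (Fin M)) (cf : ℕ → ℝ) (hG : IsPathNetwork G cf)
    (x y : Fin M) :
    G.c x y = (if x.val + 1 = y.val then cf x.val
      else if y.val + 1 = x.val then cf y.val else 0) := hG x y

lemma cTot_path {M : ℕ} (G : ElecNetwork (Fin M)) (cf : ℕ → ℝ) (hG : IsPathNetwork G cf)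
    (x : Fin M) :
    G.cTot x = (if x.val + 1 < M then cf x.val else 0) +
      (if 0 < x.val then cf (x.val - 1) else 0) := by
  have key : ∀ u : Fin M, G.c x u =
      (fun j => if x.val + 1 = j then cf x.val else if j + 1 = x.val then cf j else 0)
        u.val := fun u => c_path_val G cf hG x u
  rw [ElecNetwork.cTot, Finset.sum_congr rfl fun u _ => key u,
    Fin.sum_univ_eq_sum_range
      (fun j => if x.val + 1 = j then cf x.val else if j + 1 = x.val then cf j else 0) M,
    sum_two M (x.val + 1) (x.val - 1) (by omega) _ ?_]
  · have hx : x.val < M := x.isLt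
    have hxm : x.val - 1 < M := by omega
    rw [if_pos hxm]
    congr 1
    · by_cases h : x.val + 1 < M
      · rw [if_pos h, if_pos h, if_pos rfl]
      · rw [if_neg h, if_neg h]
    · rw [if_neg (by omega : ¬ x.val + 1 = x.val - 1)]
      by_cases h0 : 0 < x.val
      · rw [if_pos (by omega : x.val - 1 + 1 = x.val), if_pos h0]
      · rw [if_neg (by omega : ¬ x.val - 1 + 1 = x.val), if_neg h0]
  · intro j h1 h2
    split_ifs with a b
    · exact absurd a.symm h1
    · exact absurd (by omega : j = x.val - 1) h2
    · rfl

lemma sum_jump_mul {M : ℕ} (G : ElecNetwork (Fin M)) (cf : ℕ → ℝ) (hG : IsPathNetwork G cf)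
    (x : Fin M) (F : ℕ → ℝ) :
    ∑ u : Fin M, G.jump x u * F u.val =
      ((if x.val + 1 < M then cf x.val * F (x.val + 1) else 0) +
       (if 0 < x.val then cf (x.val - 1) * F (x.val - 1) else 0)) / G.cTot x := by
  have key : ∀ u : Fin M, G.jump x u * F u.val =
      (fun j => (if x.val + 1 = j then cf x.val else if j + 1 = x.val then cf j else 0)
        * F j / G.cTot x) u.val := by
    intro u
    rw [ElecNetwork.jump, c_path_val G cf hG x u]
    ring
  rw [Finset.sum_congr rfl fun u _ => key u,
    Fin.sum_univ_eq_sum_range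
      (fun j => (if x.val + 1 = j then cf x.val else if j + 1 = x.val then cf j else 0)
        * F j / G.cTot x) M,
    sum_two M (x.val + 1) (x.val - 1) (by omega) _ ?_]
  · have hx : x.val < M := x.isLt
    have hxm : x.val - 1 < M := by omega
    rw [if_pos hxm, add_div]
    congr 1
    · by_cases h : x.val + 1 < M
      · rw [if_pos h, if_pos h, if_pos rfl]
      · rw [if_neg h, if_neg h, zero_div]
    · rw [if_neg (by omega : ¬ x.val + 1 = x.val - 1)]
      by_cases h0 : 0 < x.val
      · rw [if_pos (by omega : x.val - 1 + 1 = x.val), if_pos h0]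
      · rw [if_neg (by omega : ¬ x.val - 1 + 1 = x.val), if_neg h0, zero_mul, zero_div]
  · intro j h1 h2
    split_ifs with a b
    · exact absurd a.symm h1
    · exact absurd (by omega : j = x.val - 1) h2
    · simp

lemma jump_nonneg {V : Type} [Fintype V] (G : ElecNetwork V) (hpos : ∀ x, 0 < G.cTot x)
    (x y : V) : 0 ≤ G.jump x y :=
  div_nonneg (G.nonneg x y) (le_of_lt (hpos x))

lemma sum_ofReal_jump {V : Type} [Fintype V] (G : ElecNetwork V) (hpos : ∀ x, 0 < G.cTot x)
    (v : V) : ∑ u, ENNReal.ofReal (G.jump v u) = 1 := by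
  rw [← ENNReal.ofReal_sum_of_nonneg (fun u _ => jump_nonneg G hpos v u)]
  have : ∑ u, G.jump v u = 1 := by
    simp only [ElecNetwork.jump]
    rw [← Finset.sum_div]
    exact div_self (ne_of_gt (hpos v))
  rw [this, ENNReal.ofReal_one]

end CPW
end
noncomputable section
set_option linter.unusedSectionVars false
namespace CPW

def cfG (N : ℕ) (r : ℝ) : ℕ → ℝ := fun k => if k < N then 1 else r

def cfG' (N : ℕ) (r : ℝ) : ℕ → ℝ :=
  fun k => ((N : ℝ) - k - 1 + 1 / r) * ((N : ℝ) - k + 1 / r) / (1 / r * (1 + 1 / r))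

def hfun (N : ℕ) (r : ℝ) : ℕ → ℝ := fun k => ((N : ℝ) - k + 1 / r) / ((N : ℝ) + 1 / r)

def AG (N : ℕ) : Set (Fin (N + 2)) := {v | v.val = 0 ∨ v.val = N + 1}
def AG' (N : ℕ) : Set (Fin (N + 1)) := {v | v.val = 0}
def zG (N : ℕ) : Fin (N + 2) := ⟨0, by omega⟩
def zG' (N : ℕ) : Fin (N + 1) := ⟨0, by omega⟩
def embG (N : ℕ) (v : Fin (N + 1)) : Fin (N + 2) := ⟨v.val, by omega⟩

lemma zG_mem (N : ℕ) : zG N ∈ AG N := Or.inl rfl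
lemma zG'_mem (N : ℕ) : zG' N ∈ AG' N := rfl

variable {N : ℕ} {r : ℝ}

lemma cfG_pos (hr : 0 < r) (k : ℕ) : 0 < cfG N r k := by
  unfold cfG
  split_ifs
  · norm_num
  · exact hr

lemma cfG'_pos (hr : 0 < r) {k : ℕ} (hk : k < N) : 0 < cfG' N r k := by
  have h1 : (k : ℝ) + 1 ≤ N := by exact_mod_cast hk
  have hρ : 0 < 1 / r := by positivity
  unfold cfG'
  apply div_pos (mul_pos (by linarith) (by linarith)) (mul_pos hρ (by linarith))

lemma hfun_pos (hr : 0 < r) {k : ℕ} (hk : k ≤ N) : 0 < hfun N r k := by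
  have h1 : (k : ℝ) ≤ N := by exact_mod_cast hk
  have hρ : 0 < 1 / r := by positivity
  unfold hfun
  apply div_pos (by linarith) (by linarith)

lemma hfun_zero (hr : 0 < r) : hfun N r 0 = 1 := by
  have hρ : 0 < 1 / r := by positivity
  have : (0:ℝ) < (N : ℝ) + 1 / r := by positivity
  unfold hfun
  rw [Nat.cast_zero, sub_zero]
  exact div_self (ne_of_gt this)

section Gside
variable (hr : 0 < r) (G : ElecNetwork (Fin (N + 2))) (hG : IsPathNetwork G (cfG N r))

def SG (G : ElecNetwork (Fin (N + 2))) : Fin (N + 2) → ℝ≥0∞ := Sfun G (AG N) (zG N)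

def fG (G : ElecNetwork (Fin (N + 2))) : ℕ → ℝ :=
  fun k => if h : k < N + 2 then (SG G ⟨k, h⟩).toReal else 0

include hr hG

lemma cTotG_pos (x : Fin (N + 2)) : 0 < G.cTot x := by
  rw [cTot_path G _ hG x]
  rcases lt_or_ge (x.val + 1) (N + 2) with h1 | h1
  · rw [if_pos h1]
    have hc := cfG_pos (N := N) hr x.val
    have h2 : (0:ℝ) ≤ if 0 < x.val then cfG N r (x.val - 1) else 0 := by
      split_ifs
      · exact le_of_lt (cfG_pos hr _)
      · exact le_rfl
    linarith
  · have hx : x.val < N + 2 := x.isLt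
    rw [if_neg (by omega), if_pos (by omega)]
    have hc := cfG_pos (N := N) hr (x.val - 1)
    linarith

lemma sumJumpG (v : Fin (N + 2)) : ∑ u, ENNReal.ofReal (G.jump v u) ≤ 1 :=
  le_of_eq (sum_ofReal_jump G (cTotG_pos hr G hG) v)

lemma SG_le_one (v : Fin (N + 2)) : SG G v ≤ 1 :=
  Sfun_le_one G (AG N) (zG N) (zG_mem N) (fun v => sumJumpG hr G hG v) v

lemma SG_ne_top (v : Fin (N + 2)) : SG G v ≠ ⊤ :=
  ne_top_of_le_ne_top ENNReal.one_ne_top (SG_le_one hr G hG v)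

lemma SG_toReal (u : Fin (N + 2)) : (SG G u).toReal = fG G u.val := by
  unfold fG
  rw [dif_pos u.isLt]

lemma fG_zero : fG G 0 = 1 := by
  unfold fG
  rw [dif_pos (by omega : 0 < N + 2)]
  have : SG G ⟨0, by omega⟩ = 1 := by
    unfold SG
    have := Sfun_mem G (AG N) (zG N) (zG_mem N)
      (fun v => sumJumpG hr G hG v) (v := ⟨0, by omega⟩) (Or.inl rfl)
    rw [this]
    exact if_pos rfl
  rw [this, ENNReal.toReal_one]

lemma fG_top : fG G (N + 1) = 0 := by
  unfold fG
  rw [dif_pos (by omega : N + 1 < N + 2)]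
  have : SG G ⟨N + 1, by omega⟩ = 0 := by
    unfold SG
    have := Sfun_mem G (AG N) (zG N) (zG_mem N)
      (fun v => sumJumpG hr G hG v) (v := ⟨N + 1, by omega⟩) (Or.inr rfl)
    rw [this]
    exact if_neg (by simp [zG, Fin.ext_iff])
  rw [this, ENNReal.toReal_zero]

lemma fG_harm {k : ℕ} (hk1 : 1 ≤ k) (hk2 : k ≤ N) :
    (cfG N r k + cfG N r (k - 1)) * fG G k =
      cfG N r k * fG G (k + 1) + cfG N r (k - 1) * fG G (k - 1) := by
  set v : Fin (N + 2) := ⟨k, by omega⟩ with hv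
  have hvA : v ∉ AG N := by
    simp only [AG, Set.mem_setOf_eq, hv]
    omega
  have h1 : SG G v = ∑ u, ENNReal.ofReal (G.jump v u) * SG G u :=
    Sfun_harm G (AG N) (zG N) (zG_mem N) hvA
  have h2 : (SG G v).toReal = ∑ u, G.jump v u * (SG G u).toReal := by
    rw [h1, ENNReal.toReal_sum (fun u _ => ENNReal.mul_ne_top ENNReal.ofReal_ne_top
      (SG_ne_top hr G hG u))]
    refine Finset.sum_congr rfl fun u _ => ?_
    rw [ENNReal.toReal_mul, ENNReal.toReal_ofReal (jump_nonneg G (cTotG_pos hr G hG) v u)]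
  have h3 : ∑ u, G.jump v u * (SG G u).toReal = ∑ u : Fin (N + 2), G.jump v u * fG G u.val :=
    Finset.sum_congr rfl fun u _ => by rw [SG_toReal hr G hG u]
  rw [h3, sum_jump_mul G (cfG N r) hG v (fG G)] at h2
  have hvval : v.val = k := rfl
  rw [hvval, if_pos (by omega), if_pos (by omega)] at h2
  have hcT : G.cTot v = cfG N r k + cfG N r (k - 1) := by
    rw [cTot_path G _ hG v, hvval, if_pos (by omega), if_pos (by omega)]
  rw [hcT] at h2
  have hD : cfG N r k + cfG N r (k - 1) ≠ 0 := by
    have := cfG_pos (N := N) hr k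
    have := cfG_pos (N := N) hr (k - 1)
    linarith
  have h4 : (SG G v).toReal = fG G k := by rw [SG_toReal hr G hG v, hvval]
  rw [h4, eq_div_iff hD] at h2
  linarith [h2]

def eG (r : ℝ) (G : ElecNetwork (Fin (N + 2))) : ℕ → ℝ :=
  fun k => cfG N r k * (fG G k - fG G (k + 1))

lemma eG_step {k : ℕ} (hk : k < N) : eG r G (k + 1) = eG r G k := by
  have h := fG_harm hr G hG (k := k + 1) (by omega) (by omega)
  rw [Nat.add_sub_cancel] at h
  unfold eG
  ring_nf
  ring_nf at h
  linarith

lemma eG_all : ∀ k, k ≤ N → eG r G k = eG r G 0 := by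
  intro k
  induction k with
  | zero => intro _; rfl
  | succ k ih =>
    intro hk
    rw [eG_step hr G hG (by omega), ih (by omega)]

lemma fG_tele {k : ℕ} (hk : k ≤ N + 1) : fG G 0 - fG G k = (k : ℝ) * eG r G 0 +
    (if k = N + 1 then (1 / r - 1) * eG r G 0 else 0) := by
  have h1 : fG G 0 - fG G k = ∑ j ∈ Finset.range k, (fG G j - fG G (j + 1)) :=
    (Finset.sum_range_sub' (fG G) k).symm
  have h2 : ∀ j, j < k → fG G j - fG G (j + 1) = eG r G 0 / cfG N r j := by
    intro j hj
    have hj2 : j ≤ N := by omega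
    have hcf := cfG_pos (N := N) hr j
    rw [← eG_all hr G hG j hj2]
    unfold eG
    field_simp
  rw [h1, Finset.sum_congr rfl (fun j hj => h2 j (Finset.mem_range.1 hj))]
  rcases eq_or_lt_of_le hk with he | hlt
  · rw [he, if_pos rfl, Finset.sum_range_succ]
    have h3 : ∀ j ∈ Finset.range N, eG r G 0 / cfG N r j = eG r G 0 := by
      intro j hj
      simp only [Finset.mem_range] at hj
      unfold cfG
      rw [if_pos hj, div_one]
    rw [Finset.sum_congr rfl h3, Finset.sum_const, Finset.card_range]
    unfold cfG
    rw [if_neg (lt_irrefl N)]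
    have : eG r G 0 / r = (1 / r) * eG r G 0 := by ring
    rw [this]
    push_cast
    ring
  · rw [if_neg (by omega)]
    have h3 : ∀ j ∈ Finset.range k, eG r G 0 / cfG N r j = eG r G 0 := by
      intro j hj
      simp only [Finset.mem_range] at hj
      unfold cfG
      rw [if_pos (by omega), div_one]
    rw [Finset.sum_congr rfl h3, Finset.sum_const, Finset.card_range, add_zero,
      nsmul_eq_mul]

lemma eG_val : ((N : ℝ) + 1 / r) * eG r G 0 = 1 := by
  have h := fG_tele hr G hG (k := N + 1) le_rfl
  rw [if_pos rfl, fG_zero hr G hG, fG_top hr G hG, sub_zero] at h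
  push_cast at h
  nlinarith [h]

lemma fG_eq {k : ℕ} (hk : k ≤ N) : fG G k = hfun N r k := by
  have h := fG_tele hr G hG (k := k) (by omega)
  rw [if_neg (by omega), add_zero, fG_zero hr G hG] at h
  have he := eG_val hr G hG
  have hR : (0:ℝ) < (N : ℝ) + 1 / r := by positivity
  unfold hfun
  rw [eq_div_iff (ne_of_gt hR)]
  nlinarith [h, he]

lemma SG_emb (u : Fin (N + 1)) :
    SG G (embG N u) = ENNReal.ofReal (hfun N r u.val) := by
  have h1 : (SG G (embG N u)).toReal = hfun N r u.val := by
    rw [SG_toReal hr G hG]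
    exact fG_eq hr G hG (show u.val ≤ N from Nat.lt_succ_iff.mp u.isLt)
  rw [← h1, ENNReal.ofReal_toReal (SG_ne_top hr G hG _)]

end Gside
end CPW
end
noncomputable section
set_option linter.unusedSectionVars false
namespace CPW

variable {N : ℕ} {r : ℝ}

section Gpside
variable (hN : 0 < N) (hr : 0 < r) (G' : ElecNetwork (Fin (N + 1)))
  (hG' : IsPathNetwork G' (cfG' N r))

def SG' (G' : ElecNetwork (Fin (N + 1))) : Fin (N + 1) → ℝ≥0∞ := Sfun G' (AG' N) (zG' N)

def fG' (G' : ElecNetwork (Fin (N + 1))) : ℕ → ℝ :=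
  fun k => if h : k < N + 1 then (SG' G' ⟨k, h⟩).toReal else 0

include hN hr hG'

lemma cTotG'_pos (x : Fin (N + 1)) : 0 < G'.cTot x := by
  rw [cTot_path G' _ hG' x]
  rcases lt_or_ge (x.val + 1) (N + 1) with h1 | h1
  · rw [if_pos h1]
    have hc := cfG'_pos (N := N) hr (show x.val < N by omega)
    have h2 : (0:ℝ) ≤ if 0 < x.val then cfG' N r (x.val - 1) else 0 := by
      split_ifs with h0
      · exact le_of_lt (cfG'_pos hr (by omega))
      · exact le_rfl
    linarith
  · have hx : x.val < N + 1 := x.isLt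
    have hxN : x.val = N := by omega
    rw [if_neg (by omega), if_pos (by omega)]
    have hc := cfG'_pos (N := N) hr (show x.val - 1 < N by omega)
    linarith

lemma sumJumpG' (v : Fin (N + 1)) : ∑ u, ENNReal.ofReal (G'.jump v u) ≤ 1 :=
  le_of_eq (sum_ofReal_jump G' (cTotG'_pos hN hr G' hG') v)

lemma SG'_le_one (v : Fin (N + 1)) : SG' G' v ≤ 1 :=
  Sfun_le_one G' (AG' N) (zG' N) (zG'_mem N) (fun v => sumJumpG' hN hr G' hG' v) v

lemma SG'_ne_top (v : Fin (N + 1)) : SG' G' v ≠ ⊤ :=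
  ne_top_of_le_ne_top ENNReal.one_ne_top (SG'_le_one hN hr G' hG' v)

lemma SG'_toReal (u : Fin (N + 1)) : (SG' G' u).toReal = fG' G' u.val := by
  unfold fG'
  rw [dif_pos u.isLt]

lemma fG'_zero : fG' G' 0 = 1 := by
  unfold fG'
  rw [dif_pos (by omega : 0 < N + 1)]
  have : SG' G' ⟨0, by omega⟩ = 1 := by
    unfold SG'
    have := Sfun_mem G' (AG' N) (zG' N) (zG'_mem N)
      (fun v => sumJumpG' hN hr G' hG' v) (v := ⟨0, by omega⟩) rfl
    rw [this]
    exact if_pos rfl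
  rw [this, ENNReal.toReal_one]

lemma fG'_harm {k : ℕ} (hk1 : 1 ≤ k) (hk2 : k < N) :
    (cfG' N r k + cfG' N r (k - 1)) * fG' G' k =
      cfG' N r k * fG' G' (k + 1) + cfG' N r (k - 1) * fG' G' (k - 1) := by
  set v : Fin (N + 1) := ⟨k, by omega⟩ with hv
  have hvA : v ∉ AG' N := by
    simp only [AG', Set.mem_setOf_eq, hv]
    omega
  have h1 : SG' G' v = ∑ u, ENNReal.ofReal (G'.jump v u) * SG' G' u :=
    Sfun_harm G' (AG' N) (zG' N) (zG'_mem N) hvA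
  have h2 : (SG' G' v).toReal = ∑ u, G'.jump v u * (SG' G' u).toReal := by
    rw [h1, ENNReal.toReal_sum (fun u _ => ENNReal.mul_ne_top ENNReal.ofReal_ne_top
      (SG'_ne_top hN hr G' hG' u))]
    refine Finset.sum_congr rfl fun u _ => ?_
    rw [ENNReal.toReal_mul,
      ENNReal.toReal_ofReal (jump_nonneg G' (cTotG'_pos hN hr G' hG') v u)]
  have h3 : ∑ u, G'.jump v u * (SG' G' u).toReal =
      ∑ u : Fin (N + 1), G'.jump v u * fG' G' u.val :=
    Finset.sum_congr rfl fun u _ => by rw [SG'_toReal hN hr G' hG' u]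
  rw [h3, sum_jump_mul G' (cfG' N r) hG' v (fG' G')] at h2
  have hvval : v.val = k := rfl
  rw [hvval, if_pos (by omega), if_pos (by omega)] at h2
  have hcT : G'.cTot v = cfG' N r k + cfG' N r (k - 1) := by
    rw [cTot_path G' _ hG' v, hvval, if_pos (by omega), if_pos (by omega)]
  rw [hcT] at h2
  have hD : cfG' N r k + cfG' N r (k - 1) ≠ 0 := by
    have := cfG'_pos (N := N) hr (show k < N by omega)
    have := cfG'_pos (N := N) hr (show k - 1 < N by omega)
    linarith
  have h4 : (SG' G' v).toReal = fG' G' k := by rw [SG'_toReal hN hr G' hG' v, hvval]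
  rw [h4, eq_div_iff hD] at h2
  linarith [h2]

lemma fG'_neumann : fG' G' N = fG' G' (N - 1) := by
  set v : Fin (N + 1) := ⟨N, by omega⟩ with hv
  have hvA : v ∉ AG' N := by
    simp only [AG', Set.mem_setOf_eq, hv]
    omega
  have h1 : SG' G' v = ∑ u, ENNReal.ofReal (G'.jump v u) * SG' G' u :=
    Sfun_harm G' (AG' N) (zG' N) (zG'_mem N) hvA
  have h2 : (SG' G' v).toReal = ∑ u, G'.jump v u * (SG' G' u).toReal := by
    rw [h1, ENNReal.toReal_sum (fun u _ => ENNReal.mul_ne_top ENNReal.ofReal_ne_top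
      (SG'_ne_top hN hr G' hG' u))]
    refine Finset.sum_congr rfl fun u _ => ?_
    rw [ENNReal.toReal_mul,
      ENNReal.toReal_ofReal (jump_nonneg G' (cTotG'_pos hN hr G' hG') v u)]
  have h3 : ∑ u, G'.jump v u * (SG' G' u).toReal =
      ∑ u : Fin (N + 1), G'.jump v u * fG' G' u.val :=
    Finset.sum_congr rfl fun u _ => by rw [SG'_toReal hN hr G' hG' u]
  rw [h3, sum_jump_mul G' (cfG' N r) hG' v (fG' G')] at h2
  have hvval : v.val = N := rfl
  rw [hvval, if_neg (by omega), if_pos (by omega)] at h2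
  have hcT : G'.cTot v = cfG' N r (N - 1) := by
    rw [cTot_path G' _ hG' v, hvval, if_neg (by omega), if_pos (by omega), zero_add]
  rw [hcT] at h2
  have hD : cfG' N r (N - 1) ≠ 0 :=
    ne_of_gt (cfG'_pos (N := N) hr (show N - 1 < N by omega))
  have h4 : (SG' G' v).toReal = fG' G' N := by rw [SG'_toReal hN hr G' hG' v, hvval]
  rw [h4, zero_add, eq_div_iff hD] at h2
  exact mul_right_cancel₀ hD (by linarith [h2])

def eG' (r : ℝ) (G' : ElecNetwork (Fin (N + 1))) : ℕ → ℝ :=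
  fun k => cfG' N r k * (fG' G' k - fG' G' (k + 1))

lemma eG'_step {k : ℕ} (hk : k + 1 < N) : eG' r G' (k + 1) = eG' r G' k := by
  have h := fG'_harm hN hr G' hG' (k := k + 1) (by omega) hk
  rw [Nat.add_sub_cancel] at h
  unfold eG'
  nlinarith [h]

lemma eG'_all : ∀ k, k < N → eG' r G' k = eG' r G' 0 := by
  intro k
  induction k with
  | zero => intro _; rfl
  | succ k ih =>
    intro hk
    rw [eG'_step hN hr G' hG' hk, ih (by omega)]

lemma eG'_last : eG' r G' (N - 1) = 0 := by
  have hnm : fG' G' N = fG' G' (N - 1) := fG'_neumann hN hr G' hG'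
  unfold eG'
  rw [show N - 1 + 1 = N by omega, hnm]
  ring

lemma fG'_one : ∀ k, k ≤ N → fG' G' k = 1 := by
  have he0 : eG' r G' 0 = 0 := by
    rw [← eG'_all hN hr G' hG' (N - 1) (by omega), eG'_last hN hr G' hG']
  have hstep : ∀ k, k < N → fG' G' (k + 1) = fG' G' k := by
    intro k hk
    have h1 : eG' r G' k = 0 := by rw [eG'_all hN hr G' hG' k hk, he0]
    have h2 := cfG'_pos (N := N) hr hk
    unfold eG' at h1
    rcases mul_eq_zero.1 h1 with h3 | h3
    · exact absurd h3 (ne_of_gt h2)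
    · linarith
  intro k
  induction k with
  | zero => intro _; exact fG'_zero hN hr G' hG'
  | succ k ih =>
    intro hk
    rw [hstep k (by omega), ih (by omega)]

lemma SG'_one (v : Fin (N + 1)) : SG' G' v = 1 := by
  have h1 : (SG' G' v).toReal = 1 := by
    rw [SG'_toReal hN hr G' hG' v]
    exact fG'_one hN hr G' hG' v.val (Nat.lt_succ_iff.mp v.isLt)
  rw [← ENNReal.ofReal_toReal (SG'_ne_top hN hr G' hG' v), h1, ENNReal.ofReal_one]

end Gpside
end CPW
end
noncomputable section
set_option linter.unusedSectionVars false
namespace CPW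

variable {N : ℕ} {r : ℝ}

lemma perstep_real (hN : 0 < N) (hr : 0 < r)
    (G : ElecNetwork (Fin (N + 2))) (hG : IsPathNetwork G (cfG N r))
    (G' : ElecNetwork (Fin (N + 1))) (hG' : IsPathNetwork G' (cfG' N r))
    (x y : Fin (N + 1)) (hx : 1 ≤ x.val) :
    G'.jump x y * hfun N r x.val = G.jump (embG N x) (embG N y) * hfun N r y.val := by
  have hxN : x.val ≤ N := Nat.lt_succ_iff.mp x.isLt
  have hyN : y.val ≤ N := Nat.lt_succ_iff.mp y.isLt
  have hρ : (0:ℝ) < 1 / r := by positivity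
  have hR : (0:ℝ) < (N:ℝ) + 1 / r := by positivity
  have hA1 : (1:ℝ) ≤ (x.val:ℝ) := by exact_mod_cast hx
  have hAN : (x.val:ℝ) ≤ (N:ℝ) := by exact_mod_cast hxN
  simp only [ElecNetwork.jump]
  rw [c_path_val G' _ hG' x y, c_path_val G (cfG N r) hG (embG N x) (embG N y),
    cTot_path G' _ hG' x, cTot_path G (cfG N r) hG (embG N x)]
  have hex : (embG N x).val = x.val := rfl
  have hey : (embG N y).val = y.val := rfl
  rw [hex, hey]
  rw [if_pos (show x.val + 1 < N + 2 by omega), if_pos (show 0 < x.val by omega)]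
  have c1 : ((x.val - 1 : ℕ) : ℝ) = (x.val : ℝ) - 1 := by
    rw [Nat.cast_sub (by omega), Nat.cast_one]
  by_cases h1 : x.val + 1 = y.val
  · -- step to the right
    have hxN' : x.val < N := by omega
    rw [if_pos h1, if_pos h1, if_pos (show x.val + 1 < N + 1 by omega),
      if_pos (show 0 < x.val by omega)]
    have ecf : cfG N r x.val = 1 := if_pos hxN'
    have ecf2 : cfG N r (x.val - 1) = 1 := if_pos (by omega)
    rw [ecf, ecf2]
    have c2 : ((y.val : ℕ) : ℝ) = (x.val : ℝ) + 1 := by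
      rw [← h1]; push_cast; ring
    unfold cfG' hfun
    rw [c1, c2]
    have hb1 : (0:ℝ) < (N:ℝ) - (x.val:ℝ) + 1/r := by
      have h' : x.val + 1 ≤ N := by omega
      have h'' : ((x.val:ℕ):ℝ) + 1 ≤ (N:ℝ) := by exact_mod_cast h'
      linarith
    have hD : (0:ℝ) < 1/r * (1 + 1/r) := by positivity
    obtain ⟨ρ, hgen⟩ : ∃ ρ, 1/r = ρ := ⟨1/r, rfl⟩
    rw [hgen] at hb1 hD hR ⊢
    have esum : ((N:ℝ) - (x.val:ℝ) - 1 + ρ) * ((N:ℝ) - (x.val:ℝ) + ρ) / (ρ * (1 + ρ)) +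
        ((N:ℝ) - ((x.val:ℝ) - 1) - 1 + ρ) * ((N:ℝ) - ((x.val:ℝ) - 1) + ρ) / (ρ * (1 + ρ)) =
        2 * ((N:ℝ) - (x.val:ℝ) + ρ) * ((N:ℝ) - (x.val:ℝ) + ρ) / (ρ * (1 + ρ)) := by
      rw [← add_div]
      congr 1
      ring
    rw [esum, div_div_div_cancel_right₀]
    · field_simp
      ring
    · exact ne_of_gt hD
  · by_cases h2 : y.val + 1 = x.val
    · -- step to the left
      rw [if_neg h1, if_neg h1, if_pos h2, if_pos h2]
      have hy1 : (y.val : ℝ) = (x.val : ℝ) - 1 := by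
        have : ((y.val:ℕ):ℝ) + 1 = (x.val:ℝ) := by exact_mod_cast h2
        linarith
      have ecfy : cfG N r y.val = 1 := if_pos (by omega)
      rw [ecfy]
      by_cases hxtop : x.val = N
      · -- x = N
        rw [if_neg (by omega : ¬ x.val + 1 < N + 1), if_pos (by omega : 0 < x.val), zero_add]
        have ecfN : cfG N r x.val = r := by unfold cfG; rw [if_neg (by omega)]
        have ecf2 : cfG N r (x.val - 1) = 1 := if_pos (by omega)
        rw [ecfN, ecf2]
        have hxy : x.val - 1 = y.val := by omega
        rw [hxy]
        have hcfp := cfG'_pos (N := N) (r := r) hr (show y.val < N by omega)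
        rw [div_self (ne_of_gt hcfp), one_mul]
        unfold hfun
        have hxv : (x.val : ℝ) = (N : ℝ) := by exact_mod_cast hxtop
        have hyv : (y.val : ℝ) = (N : ℝ) - 1 := by
          have hc2 : (y.val : ℝ) + 1 = (x.val : ℝ) := by exact_mod_cast h2
          linarith
        rw [hxv, hyv]
        have hr1 : r + 1 ≠ 0 := by positivity
        field_simp
        ring
      · -- 1 ≤ x ≤ N-1
        have hxN' : x.val < N := by omega
        rw [if_pos (show x.val + 1 < N + 1 by omega), if_pos (show 0 < x.val by omega)]
        have ecf : cfG N r x.val = 1 := if_pos hxN'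
        have ecf2 : cfG N r (x.val - 1) = 1 := if_pos (by omega)
        rw [ecf, ecf2]
        unfold cfG' hfun
        rw [c1]
        have hyn : (y.val : ℝ) = (x.val:ℝ) - 1 := hy1
        rw [hyn]
        have hb1 : (0:ℝ) < (N:ℝ) - (x.val:ℝ) + 1/r := by
          have h' : x.val + 1 ≤ N := by omega
          have h'' : ((x.val:ℕ):ℝ) + 1 ≤ (N:ℝ) := by exact_mod_cast h'
          linarith
        have hD : (0:ℝ) < 1/r * (1 + 1/r) := by positivity
        obtain ⟨ρ, hgen⟩ : ∃ ρ, 1/r = ρ := ⟨1/r, rfl⟩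
        rw [hgen] at hb1 hD hR ⊢
        have esum : ((N:ℝ) - (x.val:ℝ) - 1 + ρ) * ((N:ℝ) - (x.val:ℝ) + ρ) / (ρ * (1 + ρ)) +
            ((N:ℝ) - ((x.val:ℝ) - 1) - 1 + ρ) * ((N:ℝ) - ((x.val:ℝ) - 1) + ρ) / (ρ * (1 + ρ)) =
            2 * ((N:ℝ) - (x.val:ℝ) + ρ) * ((N:ℝ) - (x.val:ℝ) + ρ) / (ρ * (1 + ρ)) := by
          rw [← add_div]
          congr 1
          ring
        rw [esum, div_div_div_cancel_right₀]
        · field_simp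
          ring
        · exact ne_of_gt hD
    · -- not adjacent
      rw [if_neg h1, if_neg h2, if_neg h1, if_neg h2, zero_div, zero_div, zero_mul, zero_mul]

lemma perstep (hN : 0 < N) (hr : 0 < r)
    (G : ElecNetwork (Fin (N + 2))) (hG : IsPathNetwork G (cfG N r))
    (G' : ElecNetwork (Fin (N + 1))) (hG' : IsPathNetwork G' (cfG' N r))
    (x y : Fin (N + 1)) (hx : 1 ≤ x.val) :
    ENNReal.ofReal (G'.jump x y) * ENNReal.ofReal (hfun N r x.val) =
      ENNReal.ofReal (G.jump (embG N x) (embG N y)) * ENNReal.ofReal (hfun N r y.val) := by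
  rw [← ENNReal.ofReal_mul (jump_nonneg G' (cTotG'_pos hN hr G' hG') x y),
    ← ENNReal.ofReal_mul (jump_nonneg G (cTotG_pos hr G hG) _ _),
    perstep_real hN hr G hG G' hG' x y hx]

lemma telescope (hN : 0 < N) (hr : 0 < r)
    (G : ElecNetwork (Fin (N + 2))) (hG : IsPathNetwork G (cfG N r))
    (G' : ElecNetwork (Fin (N + 1))) (hG' : IsPathNetwork G' (cfG' N r))
    (n : ℕ) (w : ℕ → Fin (N + 1)) (hw : ∀ i < n, 1 ≤ (w i).val) :
    (∏ i ∈ Finset.range n, ENNReal.ofReal (G'.jump (w i) (w (i + 1)))) *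
        ENNReal.ofReal (hfun N r (w 0).val) =
      (∏ i ∈ Finset.range n, ENNReal.ofReal (G.jump (embG N (w i)) (embG N (w (i + 1))))) *
        ENNReal.ofReal (hfun N r (w n).val) := by
  induction n with
  | zero => simp
  | succ n ih =>
    rw [Finset.prod_range_succ, Finset.prod_range_succ]
    have hih := ih (fun i hi => hw i (by omega))
    calc (∏ i ∈ Finset.range n, ENNReal.ofReal (G'.jump (w i) (w (i + 1)))) *
          ENNReal.ofReal (G'.jump (w n) (w (n + 1))) * ENNReal.ofReal (hfun N r (w 0).val)
        = ((∏ i ∈ Finset.range n, ENNReal.ofReal (G'.jump (w i) (w (i + 1)))) *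
            ENNReal.ofReal (hfun N r (w 0).val)) * ENNReal.ofReal (G'.jump (w n) (w (n + 1))) := by
          ring
      _ = ((∏ i ∈ Finset.range n, ENNReal.ofReal (G.jump (embG N (w i)) (embG N (w (i + 1))))) *
            ENNReal.ofReal (hfun N r (w n).val)) * ENNReal.ofReal (G'.jump (w n) (w (n + 1))) := by
          rw [hih]
      _ = (∏ i ∈ Finset.range n, ENNReal.ofReal (G.jump (embG N (w i)) (embG N (w (i + 1))))) *
            (ENNReal.ofReal (G'.jump (w n) (w (n + 1))) * ENNReal.ofReal (hfun N r (w n).val)) := by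
          ring
      _ = (∏ i ∈ Finset.range n, ENNReal.ofReal (G.jump (embG N (w i)) (embG N (w (i + 1))))) *
            (ENNReal.ofReal (G.jump (embG N (w n)) (embG N (w (n + 1)))) *
              ENNReal.ofReal (hfun N r (w (n + 1)).val)) := by
          rw [perstep hN hr G hG G' hG' (w n) (w (n + 1)) (hw n (by omega))]
      _ = (∏ i ∈ Finset.range n, ENNReal.ofReal (G.jump (embG N (w i)) (embG N (w (i + 1))))) *
            ENNReal.ofReal (G.jump (embG N (w n)) (embG N (w (n + 1)))) *
            ENNReal.ofReal (hfun N r (w (n + 1)).val) := by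
          ring

end CPW
end
noncomputable section
set_option linter.unusedSectionVars false
namespace CPW

/-! ### cylinder sets on `ℕ → ℕ` -/

def cylN (n : ℕ) (w : ℕ → ℕ) : Set (ℕ → ℕ) := {f | ∀ i ≤ n, f i = w i}

def cylSys : Set (Set (ℕ → ℕ)) := {s | ∃ n w, s = cylN n w}

lemma isPiSystem_cylSys : IsPiSystem cylSys := by
  rintro s ⟨n, w, rfl⟩ t ⟨n', w', rfl⟩ hne
  obtain ⟨f, hf1, hf2⟩ := hne
  rcases le_total n n' with h | h
  · refine ⟨n', w', ?_⟩
    ext g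
    simp only [cylN, Set.mem_inter_iff, Set.mem_setOf_eq]
    constructor
    · rintro ⟨-, h2⟩
      exact h2
    · intro hg
      refine ⟨fun i hi => ?_, hg⟩
      rw [hg i (le_trans hi h), ← hf2 i (le_trans hi h), hf1 i hi]
  · refine ⟨n, w, ?_⟩
    ext g
    simp only [cylN, Set.mem_inter_iff, Set.mem_setOf_eq]
    constructor
    · rintro ⟨h2, -⟩
      exact h2
    · intro hg
      refine ⟨hg, fun i hi => ?_⟩
      rw [hg i (le_trans hi h), ← hf1 i (le_trans hi h), hf2 i hi]

lemma meas_cylN (n : ℕ) (w : ℕ → ℕ) : MeasurableSet (cylN n w) := by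
  have : cylN n w = ⋂ i ∈ Set.Iic n, (fun f : ℕ → ℕ => f i) ⁻¹' {w i} := by
    ext f
    simp [cylN, Set.mem_iInter]
  rw [this]
  exact MeasurableSet.biInter (Set.to_countable _)
    fun i _ => (measurable_pi_apply i) (measurableSet_singleton _)

lemma measurable_eval_gen (i : ℕ) :
    @Measurable (ℕ → ℕ) ℕ (MeasurableSpace.generateFrom cylSys) ⊤ (fun f => f i) := by
  refine @measurable_to_countable' ℕ (ℕ → ℕ) _ _ (MeasurableSpace.generateFrom cylSys) _ ?_
  intro k
  have hrep : ((fun f : ℕ → ℕ => f i) ⁻¹' {k}) =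
      ⋃ v : {v : Fin (i + 1) → ℕ // v ⟨i, Nat.lt_succ_self i⟩ = k},
        cylN i (fun j => if h : j < i + 1 then v.1 ⟨j, h⟩ else 0) := by
    ext f
    simp only [Set.mem_preimage, Set.mem_singleton_iff, Set.mem_iUnion, cylN,
      Set.mem_setOf_eq]
    constructor
    · intro hf
      refine ⟨⟨fun j => f j.val, hf⟩, fun j hj => ?_⟩
      rw [dif_pos (by omega)]
    · rintro ⟨v, hv⟩
      have h1 := hv i le_rfl
      rw [dif_pos (by omega)] at h1
      rw [h1]
      exact v.2
  rw [hrep]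
  exact MeasurableSet.iUnion fun v =>
    MeasurableSpace.measurableSet_generateFrom ⟨i, _, rfl⟩

lemma cylSys_generate :
    (inferInstance : MeasurableSpace (ℕ → ℕ)) = MeasurableSpace.generateFrom cylSys := by
  apply le_antisymm
  · change MeasurableSpace.pi ≤ _
    refine iSup_le fun i => ?_
    rw [← measurable_iff_comap_le]
    exact measurable_eval_gen i
  · rw [MeasurableSpace.generateFrom_le_iff]
    rintro s ⟨n, w, rfl⟩
    exact meas_cylN n w

/-! ### more walk glue -/

variable {V : Type} [Fintype V] [MeasurableSpace V] [MeasurableSingletonClass V]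
  {Ω : Type} [MeasurableSpace Ω]

lemma stopped_zero (J : ℕ → Ω → V) (A : Set V) (ω : Ω) :
    stopped J A 0 ω = J 0 ω := by
  rw [stopped, min_eq_left (Nat.zero_le _)]

lemma stopped_interior_prob {G : ElecNetwork V} {v₀ : V} {P : Measure Ω} {J : ℕ → Ω → V}
    (hJ : IsDiscreteWalk G v₀ P J) (A : Set V) (z : V) (hz : z ∈ A) (n : ℕ) (w : ℕ → V)
    (hw : ∀ i ≤ n, w i ∉ A) :
    P ({ω | ∀ i ≤ n, stopped J A i ω = w i} ∩ {ω | J (hitIdx J A ω) ω = z}) =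
      (if w 0 = v₀ then 1 else 0) *
        (∏ i ∈ Finset.range n, ENNReal.ofReal (G.jump (w i) (w (i + 1)))) *
        Sfun G A z (w n) := by
  rw [stopped_interior_inter hz hw,
    measure_iUnion (hitEvent_pairwise_disjoint hz n w)
      (fun j => meas_hitEvent hJ.1 A z _ _ _)]
  calc ∑' j, P (hitEvent J A z (n + j) n w)
      = ∑' j, ((if w 0 = v₀ then 1 else 0) *
          (∏ i ∈ Finset.range n, ENNReal.ofReal (G.jump (w i) (w (i + 1)))) *
          qfun G A z j (w n)) := by
        congr 1
        funext j
        exact hitEvent_prob hJ A z j n w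
    _ = _ := by
        rw [ENNReal.tsum_mul_left]
        rfl

end CPW
end

/-- **Conditioned walk on a path is a walk on a reweighted path** (Lemma 2.5).
For the path `0, …, N+1` with unit conductances except `c_{N,N+1} = r`, the
discrete-time walk `X` started at `m` and stopped upon hitting `{0, N+1}`,
conditioned on exiting at `0`, has the same path law as the discrete-time walk `Y`
on the path `0, …, N` with conductances
`c'_{k,k+1} = (N−k−1+1/r)(N−k+1/r)/((1/r)(1+1/r))`, started at `m` and stopped upon
hitting `0`. -/
theorem conditioned_path_walk
    (N : ℕ) (hN : 0 < N) (r : ℝ) (hr : 0 < r)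
    (G : ElecNetwork (Fin (N + 2)))
    (hG : IsPathNetwork G (fun k => if k < N then (1 : ℝ) else r))
    (G' : ElecNetwork (Fin (N + 1)))
    (hG' : IsPathNetwork G' (fun k =>
      ((N : ℝ) - k - 1 + 1 / r) * ((N : ℝ) - k + 1 / r) / (1 / r * (1 + 1 / r))))
    (m : ℕ) (hm1 : 1 ≤ m) (hmN : m ≤ N)
    (Ω : Type) [MeasurableSpace Ω] (P : Measure Ω) [IsProbabilityMeasure P]
    (X : ℕ → Ω → Fin (N + 2)) (hX : IsDiscreteWalk G ⟨m, by omega⟩ P X)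
    (Ω' : Type) [MeasurableSpace Ω'] (P' : Measure Ω') [IsProbabilityMeasure P']
    (Y : ℕ → Ω' → Fin (N + 1)) (hY : IsDiscreteWalk G' ⟨m, by omega⟩ P' Y) :
    (P[|{ω | (X (hitIdx X {v | v.val = 0 ∨ v.val = N + 1} ω) ω).val = 0}]).map
        (fun ω => fun n => (stopped X {v | v.val = 0 ∨ v.val = N + 1} n ω).val) =
      P'.map (fun ω' => fun n => (stopped Y {v | v.val = 0} n ω').val) := by
  classical
  have hGp : IsPathNetwork G (CPW.cfG N r) := hG
  have hG'p : IsPathNetwork G' (CPW.cfG' N r) := hG'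
  set Aset : Set (Fin (N + 2)) := {v | v.val = 0 ∨ v.val = N + 1} with hAdef
  set A'set : Set (Fin (N + 1)) := {v | v.val = 0} with hA'def
  have hzA : CPW.zG N ∈ Aset := Or.inl rfl
  have hzA' : CPW.zG' N ∈ A'set := rfl
  set mX : Fin (N + 2) := ⟨m, by omega⟩ with hmXdef
  set mY : Fin (N + 1) := ⟨m, by omega⟩ with hmYdef
  have hE0 : {ω | (X (hitIdx X Aset ω) ω).val = 0} =
      {ω | X (hitIdx X Aset ω) ω = CPW.zG N} := by
    ext ω
    simp only [Set.mem_setOf_eq, CPW.zG, Fin.ext_iff]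
  rw [hE0]
  set E0set : Set Ω := {ω | X (hitIdx X Aset ω) ω = CPW.zG N} with hE0def
  set Hitset : Set Ω' := {ω' | Y (hitIdx Y A'set ω') ω' = CPW.zG' N} with hHitdef
  have hXm := hX.1
  have hYm := hY.1
  have hE0m : MeasurableSet E0set := CPW.meas_hitSet hXm Aset (CPW.zG N)
  have hHitm : MeasurableSet Hitset := CPW.meas_hitSet hYm A'set (CPW.zG' N)
  have hFXm : Measurable (fun ω => fun k => (stopped X Aset k ω).val) :=
    measurable_pi_lambda _ fun k =>
      measurable_from_top.comp (CPW.meas_stopped hXm Aset k)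
  have hFYm : Measurable (fun ω' => fun k => (stopped Y A'set k ω').val) :=
    measurable_pi_lambda _ fun k =>
      measurable_from_top.comp (CPW.meas_stopped hYm A'set k)
  -- start-point facts
  have hX0 : P {ω | X 0 ω = mX} = 1 := by
    have hstart : P {ω | ∀ i ≤ 0, X i ω = (fun _ => mX) i} = 1 := by
      rw [hX.2 0 (fun _ => mX)]
      rw [if_pos rfl]
      simp
    rw [← hstart]
    congr 1
    ext ω
    simp only [Set.mem_setOf_eq]
    constructor
    · intro h i hi
      rw [Nat.le_zero.mp hi]
      exact h
    · intro h
      exact h 0 le_rfl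
  have hY0 : P' {ω' | Y 0 ω' = mY} = 1 := by
    have hstart : P' {ω' | ∀ i ≤ 0, Y i ω' = (fun _ => mY) i} = 1 := by
      rw [hY.2 0 (fun _ => mY)]
      rw [if_pos rfl]
      simp
    rw [← hstart]
    congr 1
    ext ω'
    simp only [Set.mem_setOf_eq]
    constructor
    · intro h i hi
      rw [Nat.le_zero.mp hi]
      exact h
    · intro h
      exact h 0 le_rfl
  have hmeasX0 : MeasurableSet {ω | X 0 ω = mX} := (hXm 0) (measurableSet_singleton mX)
  have hmeasY0 : MeasurableSet {ω' | Y 0 ω' = mY} := (hYm 0) (measurableSet_singleton mY)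
  have hXcompl : P {ω | X 0 ω = mX}ᶜ = 0 := by
    rw [measure_compl hmeasX0 (measure_ne_top P _), hX0, measure_univ]
    simp
  have hYcompl : P' {ω' | Y 0 ω' = mY}ᶜ = 0 := by
    rw [measure_compl hmeasY0 (measure_ne_top P' _), hY0, measure_univ]
    simp
  have hmXnotA : mX ∉ Aset := by
    simp only [hAdef, Set.mem_setOf_eq, hmXdef]
    omega
  have hmYnotA : mY ∉ A'set := by
    simp only [hA'def, Set.mem_setOf_eq, hmYdef]
    omega
  -- P(E0)
  have hstop0X : {ω | ∀ i ≤ 0, stopped X Aset i ω = (fun _ => mX) i} = {ω | X 0 ω = mX} := by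
    ext ω
    simp only [Set.mem_setOf_eq]
    constructor
    · intro h
      have := h 0 le_rfl
      rwa [CPW.stopped_zero] at this
    · intro h i hi
      rw [Nat.le_zero.mp hi, CPW.stopped_zero]
      exact h
  have hstop0Y : {ω' | ∀ i ≤ 0, stopped Y A'set i ω' = (fun _ => mY) i} =
      {ω' | Y 0 ω' = mY} := by
    ext ω'
    simp only [Set.mem_setOf_eq]
    constructor
    · intro h
      have := h 0 le_rfl
      rwa [CPW.stopped_zero] at this
    · intro h i hi
      rw [Nat.le_zero.mp hi, CPW.stopped_zero]
      exact h
  have hPE0X0 : P ({ω | X 0 ω = mX} ∩ E0set) = CPW.Sfun G Aset (CPW.zG N) mX := by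
    rw [← hstop0X,
      CPW.stopped_interior_prob hX Aset (CPW.zG N) hzA 0 (fun _ => mX) (fun i _ => hmXnotA)]
    rw [if_pos rfl]
    simp
  have hSm : CPW.Sfun G Aset (CPW.zG N) mX = ENNReal.ofReal (CPW.hfun N r m) :=
    CPW.SG_emb hr G hGp (⟨m, by omega⟩ : Fin (N + 1))
  have hE0val : P E0set = ENNReal.ofReal (CPW.hfun N r m) := by
    rw [← hSm, ← hPE0X0]
    have hdiff : P (E0set \ {ω | X 0 ω = mX}) = 0 :=
      measure_mono_null (fun ω hω => hω.2) hXcompl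
    calc P E0set = P (E0set ∩ {ω | X 0 ω = mX}) + P (E0set \ {ω | X 0 ω = mX}) :=
          (measure_inter_add_diff _ hmeasX0).symm
      _ = P (E0set ∩ {ω | X 0 ω = mX}) := by rw [hdiff, add_zero]
      _ = P ({ω | X 0 ω = mX} ∩ E0set) := by rw [Set.inter_comm]
  have hhm_pos : 0 < CPW.hfun N r m := CPW.hfun_pos hr hmN
  have hne0 : P E0set ≠ 0 := by
    rw [hE0val]
    exact (ENNReal.ofReal_pos.2 hhm_pos).ne'
  have hofne0 : (ENNReal.ofReal (CPW.hfun N r m)) ≠ 0 := (ENNReal.ofReal_pos.2 hhm_pos).ne'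
  have hofneT : (ENNReal.ofReal (CPW.hfun N r m)) ≠ ⊤ := ENNReal.ofReal_ne_top
  -- P'(hit) from the start is 1
  have hPY0Hit : P' ({ω' | Y 0 ω' = mY} ∩ Hitset) = 1 := by
    rw [← hstop0Y,
      CPW.stopped_interior_prob hY A'set (CPW.zG' N) hzA' 0 (fun _ => mY)
        (fun i _ => hmYnotA)]
    rw [if_pos rfl]
    have h1 : CPW.Sfun G' A'set (CPW.zG' N) mY = 1 := CPW.SG'_one hN hr G' hG'p mY
    rw [h1]
    simp
  have hPY0diff : P' ({ω' | Y 0 ω' = mY} \ Hitset) = 0 := by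
    have h2 := measure_inter_add_diff {ω' | Y 0 ω' = mY} hHitm (μ := P')
    rw [hPY0Hit, hY0] at h2
    have h3 : (1 : ℝ≥0∞) + P' ({ω' | Y 0 ω' = mY} \ Hitset) = 1 + 0 := by
      rw [h2, add_zero]
    exact (ENNReal.add_right_inj ENNReal.one_ne_top).mp h3
  haveI hcondP : IsProbabilityMeasure (P[|E0set]) := cond_isProbabilityMeasure hne0
  haveI : IsProbabilityMeasure ((P[|E0set]).map
      (fun ω => fun k => (stopped X Aset k ω).val)) :=
    Measure.isProbabilityMeasure_map hFXm.aemeasurable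
  haveI : IsProbabilityMeasure (P'.map
      (fun ω' => fun k => (stopped Y A'set k ω').val)) :=
    Measure.isProbabilityMeasure_map hFYm.aemeasurable
  refine MeasureTheory.ext_of_generate_finite CPW.cylSys CPW.cylSys_generate
    CPW.isPiSystem_cylSys ?_ (by simp [measure_univ])
  rintro s ⟨n, w, rfl⟩
  rw [Measure.map_apply hFXm (CPW.meas_cylN n w),
    Measure.map_apply hFYm (CPW.meas_cylN n w),
    ProbabilityTheory.cond_apply hE0m]
  rw [show (fun ω => fun k => (stopped X Aset k ω).val) ⁻¹' CPW.cylN n w =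
      {ω | ∀ i ≤ n, (stopped X Aset i ω).val = w i} from rfl]
  rw [show (fun ω' => fun k => (stopped Y A'set k ω').val) ⁻¹' CPW.cylN n w =
      {ω' | ∀ i ≤ n, (stopped Y A'set i ω').val = w i} from rfl]
  by_cases hw0 : w 0 = m
  swap
  · -- wrong start: both sides vanish
    have hL : P (E0set ∩ {ω | ∀ i ≤ n, (stopped X Aset i ω).val = w i}) = 0 := by
      refine measure_mono_null ?_ hXcompl
      intro ω hω
      have hS := hω.2
      simp only [Set.mem_compl_iff, Set.mem_setOf_eq]
      intro hmem
      have h1 := hS 0 (Nat.zero_le n)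
      rw [CPW.stopped_zero, hmem] at h1
      exact hw0 h1.symm
    have hR : P' {ω' | ∀ i ≤ n, (stopped Y A'set i ω').val = w i} = 0 := by
      refine measure_mono_null ?_ hYcompl
      intro ω' hS
      simp only [Set.mem_compl_iff, Set.mem_setOf_eq]
      intro hmem
      have h1 := hS 0 (Nat.zero_le n)
      rw [CPW.stopped_zero, hmem] at h1
      exact hw0 h1.symm
    rw [hL, hR, mul_zero]
  by_cases hwN : ∀ i ≤ n, w i ≤ N
  swap
  · -- some w k exceeds N: both sides vanish
    push_neg at hwN
    obtain ⟨k, hk, hkN⟩ := hwN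
    have hL : E0set ∩ {ω | ∀ i ≤ n, (stopped X Aset i ω).val = w i} = ∅ := by
      rw [Set.eq_empty_iff_forall_notMem]
      rintro ω ⟨hE, hS⟩
      have h1 := hS k hk
      have h2 : (stopped X Aset k ω).val < N + 2 := (stopped X Aset k ω).isLt
      have h3 : (stopped X Aset k ω).val = N + 1 := by omega
      have hmem : X (min k (hitIdx X Aset ω)) ω ∈ Aset := Or.inr h3
      have hmin := CPW.hit_eq_min hmem
      have h4 : X (hitIdx X Aset ω) ω = stopped X Aset k ω := by
        rw [hmin]
        rfl
      rw [Set.mem_setOf_eq] at hE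
      rw [hE] at h4
      have h5 : (CPW.zG N).val = N + 1 := by rw [h4]; exact h3
      simp [CPW.zG] at h5
    have hR : {ω' | ∀ i ≤ n, (stopped Y A'set i ω').val = w i} = ∅ := by
      rw [Set.eq_empty_iff_forall_notMem]
      intro ω' hS
      have h1 := hS k hk
      have h2 : (stopped Y A'set k ω').val < N + 1 := (stopped Y A'set k ω').isLt
      omega
    rw [hL, hR]
    simp
  -- now: w 0 = m, and w i ≤ N for all i ≤ n
  set wY : ℕ → Fin (N + 1) :=
    (fun i => if h : i ≤ n ∧ w i ≤ N then ⟨w i, by omega⟩ else CPW.zG' N) with hwYdef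
  set wX : ℕ → Fin (N + 2) := (fun i => CPW.embG N (wY i)) with hwXdef
  have hwYval : ∀ i ≤ n, (wY i).val = w i := by
    intro i hi
    rw [hwYdef]
    simp only
    rw [dif_pos ⟨hi, hwN i hi⟩]
  have hwXval : ∀ i ≤ n, (wX i).val = w i := fun i hi => hwYval i hi
  have hwY0 : wY 0 = mY := Fin.ext (by rw [hwYval 0 (Nat.zero_le n), hw0])
  have hwX0 : wX 0 = mX := Fin.ext (by rw [hwXval 0 (Nat.zero_le n), hw0])
  have hEXset : {ω | ∀ i ≤ n, (stopped X Aset i ω).val = w i} =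
      {ω | ∀ i ≤ n, stopped X Aset i ω = wX i} := by
    ext ω
    simp only [Set.mem_setOf_eq]
    constructor
    · intro h i hi
      exact Fin.ext ((h i hi).trans (hwXval i hi).symm)
    · intro h i hi
      rw [h i hi]
      exact hwXval i hi
  have hEYset : {ω' | ∀ i ≤ n, (stopped Y A'set i ω').val = w i} =
      {ω' | ∀ i ≤ n, stopped Y A'set i ω' = wY i} := by
    ext ω'
    simp only [Set.mem_setOf_eq]
    constructor
    · intro h i hi
      exact Fin.ext ((h i hi).trans (hwYval i hi).symm)
    · intro h i hi
      rw [h i hi]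
      exact hwYval i hi
  rw [hEXset, hEYset]
  by_cases hzero : ∃ j, j ≤ n ∧ w j = 0
  · obtain ⟨k0, hk0n, hk0z⟩ := hzero
    have hkex : {j | w j = 0}.Nonempty := ⟨k0, hk0z⟩
    obtain ⟨k, hkmem, hkmin⟩ : ∃ k, w k = 0 ∧ ∀ i, i < k → w i ≠ 0 := by
      refine ⟨sInf {j | w j = 0}, Nat.sInf_mem hkex, fun i hi hzi => ?_⟩
      have hle := Nat.sInf_le (show i ∈ {j | w j = 0} from hzi)
      omega
    have hkle : k ≤ n := by
      by_contra hkn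
      push_neg at hkn
      exact hkmin k0 (by omega) hk0z
    have hwXk : wX k = CPW.zG N := Fin.ext (by rw [hwXval k hkle, hkmem]; rfl)
    have hwYk : wY k = CPW.zG' N := Fin.ext (by rw [hwYval k hkle, hkmem]; rfl)

    by_cases hconst : ∀ j, k ≤ j → j ≤ n → w j = 0
    · -- absorbed case
      have hwltX : ∀ i, i < k → wX i ∉ Aset := by
        intro i hi
        have h1 := hwXval i (by omega)
        have h2 := hwN i (by omega)
        have h3 := hkmin i hi
        simp only [hAdef, Set.mem_setOf_eq, h1]
        omega
      have hwltY : ∀ i, i < k → wY i ∉ A'set := by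
        intro i hi
        have h1 := hwYval i (by omega)
        have h3 := hkmin i hi
        simp only [hA'def, Set.mem_setOf_eq, h1]
        omega
      have hconstX : ∀ j, k ≤ j → j ≤ n → wX j = CPW.zG N := fun j h1 h2 =>
        Fin.ext (by rw [hwXval j h2, hconst j h1 h2]; rfl)
      have hconstY : ∀ j, k ≤ j → j ≤ n → wY j = CPW.zG' N := fun j h1 h2 =>
        Fin.ext (by rw [hwYval j h2, hconst j h1 h2]; rfl)
      have hEX := CPW.stopped_absorb_eq (J := X) hzA hkle hwltX hwXk hconstX
      have hEY := CPW.stopped_absorb_eq (J := Y) hzA' hkle hwltY hwYk hconstY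
      have hsubX := CPW.stopped_absorb_subset_hit (J := X) hzA hkle hwXk
      have hinter : E0set ∩ {ω | ∀ i ≤ n, stopped X Aset i ω = wX i} =
          {ω | ∀ i ≤ k, X i ω = wX i} := by
        rw [Set.inter_comm, Set.inter_eq_left.mpr hsubX, hEX]
      rw [hinter, hEY, hX.2 k wX, hY.2 k wY, hwX0, hwY0, if_pos rfl, if_pos rfl,
        one_mul, one_mul, hE0val]
      have htel := CPW.telescope hN hr G hGp G' hG'p k wY
        (fun i hi => by
          have h1 := hwYval i (by omega)
          have h3 := hkmin i hi
          omega)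
      rw [hwY0, hwYk] at htel
      have hm' : (mY).val = m := rfl
      have hz' : (CPW.zG' N).val = 0 := rfl
      rw [hm', hz', CPW.hfun_zero hr, ENNReal.ofReal_one, mul_one] at htel
      rw [← htel, mul_comm
        (∏ i ∈ Finset.range k, ENNReal.ofReal (G'.jump (wY i) (wY (i + 1))))
        (ENNReal.ofReal (CPW.hfun N r m)), ← mul_assoc,
        ENNReal.inv_mul_cancel hofne0 hofneT, one_mul]
    · -- frozen-path violation: both sides vanish
      push_neg at hconst
      obtain ⟨j, hjk, hjn, hjz⟩ := hconst
      have hL : E0set ∩ {ω | ∀ i ≤ n, stopped X Aset i ω = wX i} = ∅ := by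
        rw [Set.eq_empty_iff_forall_notMem]
        rintro ω ⟨-, hS⟩
        obtain ⟨-, -, h3⟩ := CPW.stopped_absorbed hkle
          (show wX k ∈ Aset by rw [hwXk]; exact hzA) hS
        have h4 := h3 j hjk hjn
        have h5 : w j = w k := by
          rw [← hwXval j hjn, ← hwXval k hkle, h4]
        exact hjz (by rw [h5, hkmem])
      have hR : {ω' | ∀ i ≤ n, stopped Y A'set i ω' = wY i} = ∅ := by
        rw [Set.eq_empty_iff_forall_notMem]
        intro ω' hS
        obtain ⟨-, -, h3⟩ := CPW.stopped_absorbed hkle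
          (show wY k ∈ A'set by rw [hwYk]; exact hzA') hS
        have h4 := h3 j hjk hjn
        have h5 : w j = w k := by
          rw [← hwYval j hjn, ← hwYval k hkle, h4]
        exact hjz (by rw [h5, hkmem])
      rw [hL, hR]
      simp
  · -- interior case
    push_neg at hzero
    have hwintX : ∀ i ≤ n, wX i ∉ Aset := by
      intro i hi
      have h1 := hwXval i hi
      have h2 := hwN i hi
      have h3 := hzero i hi
      simp only [hAdef, Set.mem_setOf_eq, h1]
      omega
    have hwintY : ∀ i ≤ n, wY i ∉ A'set := by
      intro i hi
      have h1 := hwYval i hi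
      have h3 := hzero i hi
      simp only [hA'def, Set.mem_setOf_eq, h1]
      omega
    have hLX : P (E0set ∩ {ω | ∀ i ≤ n, stopped X Aset i ω = wX i}) =
        (∏ i ∈ Finset.range n, ENNReal.ofReal (G.jump (wX i) (wX (i + 1)))) *
          ENNReal.ofReal (CPW.hfun N r (wY n).val) := by
      rw [Set.inter_comm,
        CPW.stopped_interior_prob hX Aset (CPW.zG N) hzA n wX hwintX, hwX0, if_pos rfl,
        one_mul]
      congr 1
      exact CPW.SG_emb hr G hGp (wY n)
    have hRY : P' {ω' | ∀ i ≤ n, stopped Y A'set i ω' = wY i} =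
        ∏ i ∈ Finset.range n, ENNReal.ofReal (G'.jump (wY i) (wY (i + 1))) := by
      have hsplit := measure_inter_add_diff
        {ω' | ∀ i ≤ n, stopped Y A'set i ω' = wY i} hHitm (μ := P')
      have hpart1 : P' ({ω' | ∀ i ≤ n, stopped Y A'set i ω' = wY i} ∩ Hitset) =
          ∏ i ∈ Finset.range n, ENNReal.ofReal (G'.jump (wY i) (wY (i + 1))) := by
        have h1 : CPW.Sfun G' A'set (CPW.zG' N) (wY n) = 1 := CPW.SG'_one hN hr G' hG'p (wY n)
        rw [CPW.stopped_interior_prob hY A'set (CPW.zG' N) hzA' n wY hwintY, hwY0,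
          if_pos rfl, one_mul, h1, mul_one]
      have hpart2 : P' ({ω' | ∀ i ≤ n, stopped Y A'set i ω' = wY i} \ Hitset) = 0 := by
        refine measure_mono_null ?_ hPY0diff
        rintro ω' ⟨hS, hH⟩
        refine ⟨?_, hH⟩
        have h1 := hS 0 (Nat.zero_le n)
        rw [CPW.stopped_zero, hwY0] at h1
        exact h1
      rw [← hsplit, hpart1, hpart2, add_zero]
    rw [hLX, hRY, hE0val]
    have htel := CPW.telescope hN hr G hGp G' hG'p n wY
      (fun i hi => by
        have h1 := hwYval i (by omega)
        have h3 := hzero i (by omega)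
        omega)
    rw [hwY0] at htel
    have hm' : (mY).val = m := rfl
    rw [hm'] at htel
    rw [← htel, mul_comm
      (∏ i ∈ Finset.range n, ENNReal.ofReal (G'.jump (wY i) (wY (i + 1))))
      (ENNReal.ofReal (CPW.hfun N r m)), ← mul_assoc,
      ENNReal.inv_mul_cancel hofne0 hofneT, one_mul]
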